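/- arXiv:0802.2468 — 12 statements merged into one kernel-verified Lean document; each statement's English description precedes it below -/
import Mathlib

section
/- Let E be a finite nonempty subset of the unit circle ∂U, let α, β ≥ 0, and let γ > max(1 + α, α + β). Then the integral ∫_{1/γ}^1 ∫₀^{2π} (rγ − 1)(1−r)^{γ−2} / ((1 − r)^α · dist(r·e^{iθ}, E)^β) dθ dr is finite. -/
open MeasureTheory Set Metric ENNReal
open Real

/-- integrability of `|x - c| ^ (-p)` on a bounded interval, for `p < 1`. -/
lemma aux_abs_rpow_integrable {p : ℝ} (hp1 : p < 1) (c a b : ℝ) :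
    MeasureTheory.IntegrableOn (fun x : ℝ => |x - c| ^ (-p)) (Set.Ioo a b) := by
  have base : ∀ R : ℝ, 0 ≤ R →
      IntervalIntegrable (fun x : ℝ => |x| ^ (-p)) volume 0 R := by
    intro R hR
    have h1 : IntervalIntegrable (fun x : ℝ => x ^ (-p)) volume 0 R :=
      intervalIntegral.intervalIntegrable_rpow' (by linarith)
    rw [intervalIntegrable_iff, Set.uIoc_of_le hR] at h1 ⊢
    exact h1.congr_fun (fun x hx => by rw [abs_of_pos hx.1]) measurableSet_Ioc
  have baseneg : ∀ R : ℝ, 0 ≤ R →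
      IntervalIntegrable (fun x : ℝ => |x| ^ (-p)) volume (-R) 0 := by
    intro R hR
    have h2 := (IntervalIntegrable.iff_comp_neg (f := fun x : ℝ => |x| ^ (-p)) (by simp)).mp (base R hR)
    simp only [abs_neg, neg_zero] at h2
    exact h2.symm
  have key2 : ∀ u v : ℝ, IntervalIntegrable (fun x : ℝ => |x| ^ (-p)) volume u v := by
    intro u v
    set R : ℝ := max |u| |v| with hRdef
    have hR : 0 ≤ R := le_trans (abs_nonneg u) (le_max_left _ _)
    have h3 : IntervalIntegrable (fun x : ℝ => |x| ^ (-p)) volume (-R) R :=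
      (baseneg R hR).trans (base R hR)
    refine h3.mono_set ?_
    rw [Set.uIcc_of_le (by linarith : -R ≤ R)]
    refine Set.uIcc_subset_Icc ⟨?_, ?_⟩ ⟨?_, ?_⟩
    · exact neg_le_of_abs_le (le_max_left _ _)
    · exact le_of_abs_le (le_max_left _ _)
    · exact neg_le_of_abs_le (le_max_right _ _)
    · exact le_of_abs_le (le_max_right _ _)
  have h4 : IntervalIntegrable (fun x : ℝ => |x - c| ^ (-p)) volume a b := by
    have := (key2 (a - c) (b - c)).comp_sub_right c
    simpa using this
  rcases le_total a b with hab | hab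
  · rw [intervalIntegrable_iff, Set.uIoc_of_le hab] at h4
    exact h4.mono_set Set.Ioo_subset_Ioc_self
  · rw [Set.Ioo_eq_empty_of_le hab]
    exact integrableOn_empty

/-- A form of Jordan's inequality for `|sin u| ^ (-p)`. -/
lemma aux_sin_rpow_bound {p : ℝ} (hp : 0 ≤ p) (u : ℝ) :
    |Real.sin u| ^ (-p) ≤ (π / 2) ^ p * |u - (round (u / π) : ℤ) * π| ^ (-p) := by
  have hπ : (0:ℝ) < π := Real.pi_pos
  set k : ℤ := round (u / π) with hk
  set v : ℝ := u - k * π with hv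
  have hvle : |v| ≤ π / 2 := by
    have h1 : |u / π - k| ≤ 1 / 2 := abs_sub_round (u / π)
    have h2 : v = π * (u / π - k) := by field_simp [hv]; ring
    rw [h2, abs_mul, abs_of_pos hπ]
    calc π * |u / π - k| ≤ π * (1 / 2) := by
          exact mul_le_mul_of_nonneg_left h1 hπ.le
      _ = π / 2 := by ring
  have hsin : |Real.sin u| = |Real.sin v| := by
    have : u = v + k * π := by rw [hv]; ring
    rw [this, Real.sin_add_int_mul_pi, abs_mul]
    have : |((-1 : ℝ)) ^ k| = 1 := by
      rcases Int.even_or_odd k with h | h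
      · rw [h.neg_one_zpow]; simp
      · rw [Odd.neg_one_zpow h]; simp
    rw [this, one_mul]
  have hJ : 2 / π * |v| ≤ |Real.sin v| := by
    have h1 : 2 / π * |v| ≤ Real.sin |v| := Real.mul_le_sin (abs_nonneg v) hvle
    refine h1.trans ?_
    rcases le_or_gt 0 v with h | h
    · rw [abs_of_nonneg h]; exact le_abs_self _
    · rw [abs_of_neg h, Real.sin_neg]; exact neg_le_abs _
  rcases eq_or_lt_of_le (abs_nonneg v) with h0 | h0
  · -- v = 0 : sin u = 0
    have hv0 : v = 0 := abs_eq_zero.mp h0.symm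
    have hsin0 : |Real.sin u| = 0 := by rw [hsin, hv0]; simp
    rcases eq_or_lt_of_le hp with hp0 | hp0
    · subst hp0
      simp [Real.rpow_zero]
    · rw [hsin0, Real.zero_rpow (by linarith : -p ≠ 0)]
      positivity
  · -- 0 < |v|
    have h2 : (0:ℝ) < 2 / π * |v| := by positivity
    have h3 : |Real.sin u| ^ (-p) ≤ (2 / π * |v|) ^ (-p) := by
      rw [hsin]
      exact Real.rpow_le_rpow_of_nonpos h2 hJ (by linarith)
    refine h3.trans_eq ?_
    rw [Real.mul_rpow (by positivity) (abs_nonneg v)]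
    congr 1
    rw [show (2:ℝ)/π = (π/2)⁻¹ by field_simp, ← Real.rpow_neg_one,
      ← Real.rpow_mul (by positivity)]
    norm_num

/-- Finiteness of the angular integral of `|sin ((θ - c)/2)| ^ (-p)` for `0 ≤ p < 1`. -/
lemma aux_sin_lintegral_lt_top {p : ℝ} (hp : 0 ≤ p) (hp1 : p < 1) (c : ℝ) :
    (∫⁻ θ in Set.Ioo (0:ℝ) (2 * π),
      ENNReal.ofReal (|Real.sin ((θ - c) / 2)| ^ (-p))) < ⊤ := by
  have hπ : (0:ℝ) < π := Real.pi_pos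
  set m : ℤ := round (-c / 2 / π) with hm
  set J : Finset ℤ := Finset.Icc (m - 1) (m + 2) with hJ
  set g : ℝ → ℝ :=
    fun θ => (π/2) ^ p * ∑ j ∈ J, 2 ^ p * |θ - (c + 2 * π * j)| ^ (-p) with hg
  have hgint : MeasureTheory.IntegrableOn g (Set.Ioo (0:ℝ) (2*π)) := by
    apply MeasureTheory.Integrable.const_mul
    apply MeasureTheory.integrable_finset_sum
    intro j _
    exact (aux_abs_rpow_integrable hp1 _ _ _).const_mul _
  have hbound : ∀ θ ∈ Set.Ioo (0:ℝ) (2*π), |Real.sin ((θ - c)/2)| ^ (-p) ≤ g θ := by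
    intro θ hθ
    set u : ℝ := (θ - c) / 2 with hu
    set k : ℤ := round (u / π) with hk
    have h1 : |Real.sin u| ^ (-p) ≤ (π/2) ^ p * |u - (k:ℝ) * π| ^ (-p) :=
      aux_sin_rpow_bound hp u
    have hkJ : k ∈ J := by
      have hk1 : |u / π - (k:ℝ)| ≤ 1/2 := abs_sub_round _
      have hm1 : |(-c/2) / π - (m:ℝ)| ≤ 1/2 := abs_sub_round _
      have hd1 : (0:ℝ) < (u - (-c/2)) / π := by
        apply div_pos _ hπ
        rw [hu]; linarith [hθ.1]
      have hd2 : (u - (-c/2)) / π < 1 := by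
        rw [div_lt_one hπ, hu]
        have := hθ.2; linarith
      have hklt : ((k - m : ℤ) : ℝ) < 2 := by
        push_cast
        have e1 : u / π - (k:ℝ) ≥ -(1/2) := neg_le_of_abs_le hk1
        have e2 : (-c/2) / π - (m:ℝ) ≤ 1/2 := le_of_abs_le hm1
        have e3 : u / π - (-c/2)/π < 1 := by
          rw [← sub_div]; exact hd2
        linarith
      have hkgt : (-1 : ℝ) < ((k - m : ℤ) : ℝ) := by
        push_cast
        have e1 : u / π - (k:ℝ) ≤ 1/2 := le_of_abs_le hk1
        have e2 : (-c/2) / π - (m:ℝ) ≥ -(1/2) := neg_le_of_abs_le hm1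
        have e3 : (0:ℝ) < u / π - (-c/2)/π := by rw [← sub_div]; exact hd1
        linarith
      have h2 : k - m < 2 := by exact_mod_cast hklt
      have h3 : -1 < k - m := by exact_mod_cast hkgt
      rw [hJ, Finset.mem_Icc]; omega
    have h4 : |u - (k:ℝ) * π| = |θ - (c + 2 * π * k)| / 2 := by
      rw [hu]
      rw [show (θ - c)/2 - (k:ℝ)*π = (θ - (c + 2*π*k))/2 by ring]
      rw [abs_div]
      norm_num
    have h5 : |u - (k:ℝ) * π| ^ (-p) = 2 ^ p * |θ - (c + 2 * π * k)| ^ (-p) := by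
      rw [h4, Real.div_rpow (abs_nonneg _) (by norm_num : (0:ℝ) ≤ 2),
        Real.rpow_neg (by norm_num : (0:ℝ) ≤ 2), div_inv_eq_mul, mul_comm]
    refine h1.trans ?_
    rw [h5, hg]
    apply mul_le_mul_of_nonneg_left _ (by positivity)
    exact Finset.single_le_sum (f := fun j : ℤ => 2 ^ p * |θ - (c + 2 * π * j)| ^ (-p))
      (fun j _ => by positivity) hkJ
  calc (∫⁻ θ in Set.Ioo (0:ℝ) (2 * π), ENNReal.ofReal (|Real.sin ((θ - c) / 2)| ^ (-p)))
      ≤ ∫⁻ θ in Set.Ioo (0:ℝ) (2 * π), ENNReal.ofReal (g θ) := by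
        apply MeasureTheory.setLIntegral_mono
        · fun_prop
        · intro θ hθ
          exact ENNReal.ofReal_le_ofReal (hbound θ hθ)
    _ < ⊤ := hgint.setLIntegral_lt_top

/-- Chord length formula on the unit circle. -/
lemma aux_abs_exp_sub (θ φ : ℝ) :
    ‖Complex.exp ((θ:ℂ) * Complex.I) - Complex.exp ((φ:ℂ) * Complex.I)‖ =
      2 * |Real.sin ((θ - φ) / 2)| := by
  have key : ∀ a b : ℂ, Complex.exp ((a+b) * Complex.I) - Complex.exp ((a-b) * Complex.I)
      = Complex.exp (a * Complex.I) * (2 * Complex.sin b * Complex.I) := by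
    intro a b
    have hne : Complex.exp (b * Complex.I) ≠ 0 := Complex.exp_ne_zero _
    rw [Complex.sin, add_mul, sub_mul, Complex.exp_add, Complex.exp_sub,
      neg_mul, Complex.exp_neg]
    have hI : Complex.I ^ 2 = -1 := Complex.I_sq
    linear_combination (-(Complex.exp (a*Complex.I)) * ((Complex.exp (b*Complex.I))⁻¹ -
      Complex.exp (b*Complex.I))) * hI
  have ha : (((θ+φ)/2 : ℝ):ℂ) + (((θ-φ)/2 : ℝ):ℂ) = (θ:ℂ) := by push_cast; ring
  have hb : (((θ+φ)/2 : ℝ):ℂ) - (((θ-φ)/2 : ℝ):ℂ) = (φ:ℂ) := by push_cast; ring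
  have h2 := key (((θ+φ)/2 : ℝ):ℂ) (((θ-φ)/2 : ℝ):ℂ)
  rw [ha, hb] at h2
  rw [h2, norm_mul, Complex.norm_exp_ofReal_mul_I, one_mul, norm_mul, norm_mul,
    Complex.norm_I, Complex.norm_two, mul_one, ← Complex.ofReal_sin, Complex.norm_real, Real.norm_eq_abs]

/-- Finiteness of the constant `C_γ(m)` for `m ∈ M(E,α,β)` and
`γ > max(1+α, α+β)`. -/
theorem stmt_3 (E : Set ℂ) (hE : E ⊆ sphere (0:ℂ) 1) (hEfin : E.Finite)
    (hEne : E.Nonempty) (α β : ℝ) (hα : 0 ≤ α) (hβ : 0 ≤ β)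
    (γ : ℝ) (hγ : max (1 + α) (α + β) < γ) :
    (∫⁻ r in Ioo (1/γ) 1, ∫⁻ θ in Ioo (0:ℝ) (2 * Real.pi),
        ENNReal.ofReal ((r * γ - 1) * (1 - r) ^ (γ - 2) /
          ((1 - r) ^ α *
            (Metric.infDist ((r : ℂ) * Complex.exp ((θ : ℂ) * Complex.I)) E) ^ β))) < ⊤ := by
  have hπ : (0:ℝ) < π := Real.pi_pos
  have hγ1 : 1 + α < γ := lt_of_le_of_lt (le_max_left _ _) hγ
  have hγ2 : α + β < γ := lt_of_le_of_lt (le_max_right _ _) hγ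
  have hγ0 : (0:ℝ) < γ := by linarith
  -- choice of the auxiliary exponent p
  set p : ℝ := (max (β + α + 1 - γ) 0 + min β 1) / 2 with hpdef
  have hminb : (0:ℝ) ≤ min β 1 := le_min hβ zero_le_one
  have hc1 : β + α + 1 - γ < 1 := by linarith
  have hcβ : β + α + 1 - γ < β := by linarith
  have hcmin : β + α + 1 - γ < min β 1 := lt_min hcβ hc1
  have hmaxle : max (β + α + 1 - γ) 0 ≤ min β 1 := max_le hcmin.le hminb
  have hp0 : 0 ≤ p := by
    have := le_max_right (β + α + 1 - γ) (0:ℝ)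
    rw [hpdef]; linarith
  have hpβ : p ≤ β := by
    have h1 : min β 1 ≤ β := min_le_left _ _
    rw [hpdef]; linarith
  have hp1 : p < 1 := by
    have h1 : max (β + α + 1 - γ) 0 < 1 := max_lt hc1 one_pos
    have h2 : min β 1 ≤ 1 := min_le_right _ _
    rw [hpdef]; linarith
  have hpc : β + α + 1 - γ < p := by
    have h4 : β + α + 1 - γ ≤ max (β + α + 1 - γ) 0 := le_max_left _ _
    rw [hpdef]; linarith
  set q : ℝ := γ - 2 - α + p - β with hqdef
  have hq : -1 < q := by rw [hqdef]; linarith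
  -- the finite constant
  set F : Finset ℂ := hEfin.toFinset with hF
  have hTfin : ∀ e : ℂ, (∫⁻ θ in Ioo (0:ℝ) (2*π),
      ENNReal.ofReal (|Real.sin ((θ - Complex.arg e)/2)| ^ (-p))) < ⊤ :=
    fun e => aux_sin_lintegral_lt_top hp0 hp1 _
  set C : ℝ≥0∞ := ∑ e ∈ F, ∫⁻ θ in Ioo (0:ℝ) (2*π),
      ENNReal.ofReal (|Real.sin ((θ - Complex.arg e)/2)| ^ (-p)) with hC
  have hCfin : C < ⊤ := by
    rw [hC]
    exact ENNReal.sum_lt_top.mpr fun e _ => hTfin e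
  -- the null set of angles
  set N : Set ℝ := ⋃ e ∈ E, {θ : ℝ | Real.sin ((θ - Complex.arg e)/2) = 0} with hNdef
  have hN : volume N = 0 := by
    have hcnt : N.Countable := by
      rw [hNdef]
      refine Set.Countable.biUnion hEfin.countable (fun e _ => ?_)
      refine Set.Countable.mono ?_
        (Set.countable_range (fun n : ℤ => Complex.arg e + 2 * π * n))
      intro θ hθ
      rcases Real.sin_eq_zero_iff.mp hθ with ⟨n, hn⟩
      exact ⟨n, show Complex.arg e + 2 * π * n = θ by linarith⟩
    exact hcnt.measure_zero _
  -- main pointwise estimate for fixed r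
  have step1 : ∀ r ∈ Ioo (1/γ) 1,
      (∫⁻ θ in Ioo (0:ℝ) (2 * π),
        ENNReal.ofReal ((r * γ - 1) * (1 - r) ^ (γ - 2) /
          ((1 - r) ^ α *
            (Metric.infDist ((r : ℂ) * Complex.exp ((θ : ℂ) * Complex.I)) E) ^ β)))
      ≤ ENNReal.ofReal (γ * (1 - r) ^ q) * C := by
    intro r hr
    have hr0 : 0 < r := lt_trans (by positivity : (0:ℝ) < 1/γ) hr.1
    have hr1 : r < 1 := hr.2
    have hδ0 : 0 < 1 - r := by linarith
    have hrγ : 0 < r * γ - 1 := by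
      have := (div_lt_iff₀ hγ0).mp hr.1
      linarith
    have hrγ2 : r * γ - 1 ≤ γ := by nlinarith
    have hae : ∀ᵐ (θ : ℝ) ∂(volume.restrict (Ioo (0:ℝ) (2 * π))),
        ENNReal.ofReal ((r * γ - 1) * (1 - r) ^ (γ - 2) /
          ((1 - r) ^ α *
            (Metric.infDist ((r : ℂ) * Complex.exp ((θ : ℂ) * Complex.I)) E) ^ β))
        ≤ ENNReal.ofReal (γ * (1 - r) ^ q) *
            ∑ e ∈ F, ENNReal.ofReal (|Real.sin ((θ - Complex.arg e)/2)| ^ (-p)) := by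
      refine ae_restrict_of_ae ?_
      have h0 : ∀ᵐ θ : ℝ, θ ∉ N := measure_eq_zero_iff_ae_notMem.mp hN
      filter_upwards [h0] with θ hθN
      set z : ℂ := (r:ℂ) * Complex.exp ((θ:ℂ) * Complex.I) with hz
      obtain ⟨e, heE, heq⟩ := hEfin.isCompact.exists_infDist_eq_dist hEne z
      have hsne : Real.sin ((θ - Complex.arg e)/2) ≠ 0 := by
        intro h
        exact hθN (Set.mem_biUnion heE h)
      set s : ℝ := |Real.sin ((θ - Complex.arg e)/2)| with hs
      have hs0 : 0 < s := abs_pos.mpr hsne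
      have he1 : ‖e‖ = 1 := by
        have h := hE heE
        rw [mem_sphere_iff_norm, sub_zero] at h
        exact h
      have heexp : e = Complex.exp ((Complex.arg e : ℂ) * Complex.I) := by
        conv_lhs => rw [← Complex.norm_mul_exp_arg_mul_I e]
        rw [he1]
        simp
      have habsz : ‖z‖ = r := by
        rw [hz, norm_mul, Complex.norm_real, Real.norm_eq_abs, abs_of_pos hr0,
          Complex.norm_exp_ofReal_mul_I, mul_one]
      set D : ℝ := Metric.infDist z E with hD
      have hDd : D = ‖z - e‖ := by
        rw [heq, Complex.dist_eq]
      have hD1 : 1 - r ≤ D := by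
        rw [hDd]
        have h1 : ‖e‖ - ‖z‖ ≤ ‖e - z‖ := norm_sub_norm_le e z
        rw [he1, habsz] at h1
        calc 1 - r ≤ ‖e - z‖ := h1
          _ = ‖z - e‖ := norm_sub_rev e z
      have hD0 : 0 < D := lt_of_lt_of_le hδ0 hD1
      have hexpz : ‖Complex.exp ((θ:ℂ) * Complex.I) - z‖ = 1 - r := by
        rw [hz]
        rw [show Complex.exp ((θ:ℂ)*Complex.I) - (r:ℂ) * Complex.exp ((θ:ℂ)*Complex.I)
            = ((1 - r : ℝ):ℂ) * Complex.exp ((θ:ℂ)*Complex.I) by push_cast; ring]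
        rw [norm_mul, Complex.norm_real, Real.norm_eq_abs, abs_of_pos hδ0,
          Complex.norm_exp_ofReal_mul_I, mul_one]
      have hD2 : s ≤ D := by
        have h2s : ‖Complex.exp ((θ:ℂ) * Complex.I) -
            Complex.exp ((Complex.arg e : ℂ) * Complex.I)‖ = 2 * s :=
          aux_abs_exp_sub θ (Complex.arg e)
        have htri := norm_sub_le_norm_sub_add_norm_sub (Complex.exp ((θ:ℂ) * Complex.I)) z
          (Complex.exp ((Complex.arg e : ℂ) * Complex.I))
        rw [← heexp] at h2s htri
        rw [hexpz, ← hDd, h2s] at htri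
        linarith
      -- the real-valued inequality
      have hDβ : (1 - r) ^ (β - p) * s ^ p ≤ D ^ β := by
        have h1 : D ^ β = D ^ (β - p) * D ^ p := by
          rw [← Real.rpow_add hD0]; ring_nf
        rw [h1]
        exact mul_le_mul (Real.rpow_le_rpow hδ0.le hD1 (by linarith))
          (Real.rpow_le_rpow hs0.le hD2 hp0) (Real.rpow_nonneg hs0.le p)
          (Real.rpow_nonneg hD0.le _)
      have key : (r * γ - 1) * (1 - r) ^ (γ - 2) / ((1 - r) ^ α * D ^ β)
          ≤ γ * (1 - r) ^ q * s ^ (-p) := by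
        have hd0 : (0:ℝ) < (1 - r) ^ α * ((1 - r) ^ (β - p) * s ^ p) := by positivity
        calc (r * γ - 1) * (1 - r) ^ (γ - 2) / ((1 - r) ^ α * D ^ β)
            ≤ γ * (1 - r) ^ (γ - 2) / ((1 - r) ^ α * ((1 - r) ^ (β - p) * s ^ p)) := by
              apply div_le_div₀ (by positivity)
                (mul_le_mul_of_nonneg_right hrγ2 (Real.rpow_nonneg hδ0.le _)) hd0
              exact mul_le_mul_of_nonneg_left hDβ (Real.rpow_nonneg hδ0.le _)
          _ = γ * (1 - r) ^ q * s ^ (-p) := by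
              have hab : (1 - r) ^ α * ((1 - r) ^ (β - p) * s ^ p)
                  = (1 - r) ^ (α + (β - p)) * s ^ p := by
                rw [← mul_assoc, ← Real.rpow_add hδ0]
              have h2 : (1 - r) ^ q = (1 - r) ^ (γ - 2) / (1 - r) ^ (α + (β - p)) := by
                rw [← Real.rpow_sub hδ0]
                congr 1
                rw [hqdef]; ring
              rw [hab, h2, Real.rpow_neg hs0.le]
              ring
      calc ENNReal.ofReal ((r * γ - 1) * (1 - r) ^ (γ - 2) /
              ((1 - r) ^ α * (Metric.infDist ((r:ℂ) * Complex.exp ((θ:ℂ) * Complex.I)) E) ^ β))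
          ≤ ENNReal.ofReal (γ * (1 - r) ^ q * s ^ (-p)) := ENNReal.ofReal_le_ofReal key
        _ = ENNReal.ofReal (γ * (1 - r) ^ q) * ENNReal.ofReal (s ^ (-p)) :=
            ENNReal.ofReal_mul (by positivity)
        _ ≤ ENNReal.ofReal (γ * (1 - r) ^ q) *
              ∑ e' ∈ F, ENNReal.ofReal (|Real.sin ((θ - Complex.arg e')/2)| ^ (-p)) := by
            apply mul_le_mul_right
            exact Finset.single_le_sum
              (f := fun e' : ℂ => ENNReal.ofReal (|Real.sin ((θ - Complex.arg e')/2)| ^ (-p)))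
              (fun i _ => zero_le) (hEfin.mem_toFinset.mpr heE)
    calc (∫⁻ θ in Ioo (0:ℝ) (2 * π),
          ENNReal.ofReal ((r * γ - 1) * (1 - r) ^ (γ - 2) /
            ((1 - r) ^ α *
              (Metric.infDist ((r : ℂ) * Complex.exp ((θ : ℂ) * Complex.I)) E) ^ β)))
        ≤ ∫⁻ θ in Ioo (0:ℝ) (2 * π), ENNReal.ofReal (γ * (1 - r) ^ q) *
            ∑ e ∈ F, ENNReal.ofReal (|Real.sin ((θ - Complex.arg e)/2)| ^ (-p)) :=
          lintegral_mono_ae hae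
      _ = ENNReal.ofReal (γ * (1 - r) ^ q) * C := by
          rw [lintegral_const_mul _ (by fun_prop),
            lintegral_finset_sum _ (fun e _ => by fun_prop)]
  -- integrability in r
  have h1γ : 1/γ < 1 := by
    rw [div_lt_one hγ0]; linarith
  have hint : MeasureTheory.IntegrableOn (fun r : ℝ => γ * (1 - r) ^ q) (Ioo (1/γ) 1) := by
    have h1 : IntervalIntegrable (fun x : ℝ => x ^ q) volume 0 (1 - 1/γ) :=
      intervalIntegral.intervalIntegrable_rpow' hq
    have h2 := h1.comp_sub_left 1
    simp only [sub_zero, _root_.sub_sub_cancel] at h2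
    have h3 := h2.symm
    rw [intervalIntegrable_iff, Set.uIoc_of_le h1γ.le] at h3
    exact (h3.mono_set Set.Ioo_subset_Ioc_self).const_mul γ
  have hfin2 : (∫⁻ r in Ioo (1/γ) 1, ENNReal.ofReal (γ * (1 - r) ^ q)) < ⊤ :=
    hint.setLIntegral_lt_top
  calc (∫⁻ r in Ioo (1/γ) 1, ∫⁻ θ in Ioo (0:ℝ) (2 * Real.pi),
        ENNReal.ofReal ((r * γ - 1) * (1 - r) ^ (γ - 2) /
          ((1 - r) ^ α *
            (Metric.infDist ((r : ℂ) * Complex.exp ((θ : ℂ) * Complex.I)) E) ^ β)))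
      ≤ ∫⁻ r in Ioo (1/γ) 1, ENNReal.ofReal (γ * (1 - r) ^ q) * C := by
        apply setLIntegral_mono ((by fun_prop : Measurable fun r : ℝ =>
          ENNReal.ofReal (γ * (1 - r) ^ q)).mul_const C) step1
    _ = (∫⁻ r in Ioo (1/γ) 1, ENNReal.ofReal (γ * (1 - r) ^ q)) * C :=
        lintegral_mul_const _ (by fun_prop)
    _ < ⊤ := ENNReal.mul_lt_top hfin2 hCfin
end

section
/- For every z in the open unit disk U with z ≠ 0, setting w(z) = (z + z⁻¹)/2, one has (1/4)·|z² − 1|·(1 − |z|)/|z| ≤ dist(w(z), [−1,1]) ≤ ((1 + √2)/4)·|z² − 1|·(1 − |z|)/|z|. -/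
set_option maxHeartbeats 1000000

open Metric Set

private lemma norm_sq_re_im (A : ℂ) : ‖A‖^2 = A.re^2 + A.im^2 := by
  rw [Complex.sq_norm, Complex.normSq_apply]; ring

private lemma key_lower_aux (r x y t : ℝ) (hxy : x^2 + y^2 = r^2) (hr0 : 0 ≤ r)
    (hr1 : r ≤ 1) (ht : -1 ≤ t) (ht1 : t ≤ 1) (hx : 0 ≤ x) :
    (1-r)^2 * (r^2 * ((1-r^2)^2 + 4*y^2)) ≤
      4 * ((2*r^2*t - x*(1+r^2))^2 + (1-r^2)^2*y^2) := by
  have hr2 : r^2 ≤ 1 := by nlinarith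
  have hr4 : r^4 ≤ 1 := by nlinarith
  rcases le_total (x*(1+r^2)) (2*r^2) with hA | hB
  · -- case A
    have h1 : (0:ℝ) ≤ 2*r^2 - x*(1+r^2) := by linarith
    have h2 : (0:ℝ) ≤ 2*r^2 + x*(1+r^2) := by positivity
    have hx2 : x^2*(1+r^2)^2 ≤ 4*r^4 := by nlinarith [mul_nonneg h1 h2]
    have hy2 : r^2*(1-r^2)^2 ≤ y^2*(1+r^2)^2 := by nlinarith [hx2, sq_nonneg (1+r^2)]
    have h4 : (1+r^2)^2 ≤ 4*(1+2*r) := by nlinarith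
    have c1 : (1-r)^2*(r^2*(1-r^2)^2) ≤ (1-r)^2*(y^2*(1+r^2)^2) := by
      nlinarith [hy2, sq_nonneg (1-r)]
    have c2 : (1-r)^2*(y^2*(1+r^2)^2) ≤ (1-r)^2*(y^2*(4*(1+2*r))) := by
      nlinarith [h4, mul_nonneg (sq_nonneg (1-r)) (sq_nonneg y)]
    nlinarith [c1, c2, sq_nonneg (2*r^2*t - x*(1+r^2))]
  · -- case B
    have hxr : x ≤ r := by nlinarith [sq_nonneg y]
    have hsq : (x*(1+r^2) - 2*r^2)^2 ≤ (2*r^2*t - x*(1+r^2))^2 := by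
      have ha : (0:ℝ) ≤ (x*(1+r^2)-2*r^2*t) - (x*(1+r^2)-2*r^2) := by nlinarith [sq_nonneg r]
      have hb : (0:ℝ) ≤ (x*(1+r^2)-2*r^2*t) + (x*(1+r^2)-2*r^2) := by nlinarith [sq_nonneg r]
      nlinarith [mul_nonneg ha hb]
    have hfac : (16*r^2 + 4*r^2*(1-r)^2)*(x+r) ≤ 16*r^2*(1+r^2) := by
      nlinarith [mul_nonneg (sub_nonneg.2 hxr) (show (0:ℝ) ≤ 16*r^2 + 4*r^2*(1-r)^2 by positivity),
        mul_nonneg (mul_nonneg (sq_nonneg r) (sq_nonneg (1-r))) (show (0:ℝ) ≤ 2 - r by linarith)]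
    have hdec : 0 ≤ (r - x) * (16*r^2*(1+r^2) - (16*r^2 + 4*r^2*(1-r)^2)*(x+r)) :=
      mul_nonneg (by linarith) (by linarith)
    have hGr : (0:ℝ) ≤ r^2*(1-r)^4*(4-(1+r)^2) := by
      have : (0:ℝ) ≤ 4-(1+r)^2 := by nlinarith
      positivity
    have hy2 : y^2 = r^2 - x^2 := by linarith
    have hG : (1-r)^2 * (r^2 * ((1-r^2)^2 + 4*y^2)) ≤
        4 * ((x*(1+r^2) - 2*r^2)^2 + (1-r^2)^2*y^2) := by
      rw [hy2]
      linarith [hdec, hGr]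
    linarith [hsq, hG]

private lemma key_lower (r x y t : ℝ) (hxy : x^2 + y^2 = r^2) (hr0 : 0 ≤ r)
    (hr1 : r ≤ 1) (ht : -1 ≤ t) (ht1 : t ≤ 1) :
    (1-r)^2 * (r^2 * ((1-r^2)^2 + 4*y^2)) ≤
      4 * ((2*r^2*t - x*(1+r^2))^2 + (1-r^2)^2*y^2) := by
  rcases le_total 0 x with hx | hx
  · exact key_lower_aux r x y t hxy hr0 hr1 ht ht1 hx
  · have h := key_lower_aux r (-x) y (-t) (by nlinarith) hr0 hr1 (by linarith) (by linarith)
      (by linarith)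
    nlinarith [h]

private lemma key_upper (r x y : ℝ) (hxy : x^2 + y^2 = r^2) (hr0 : 0 ≤ r) (hr1 : r ≤ 1) :
    4*(x^2*(1-r)^4 + (1-r^2)^2*y^2) ≤
      (3+2*Real.sqrt 2)*(r^2*(1-r)^2*((1-r^2)^2+4*y^2)) := by
  set s := Real.sqrt 2 with hsdef
  have hs : s^2 = 2 := Real.sq_sqrt (by norm_num)
  have hs1 : 1 ≤ s := by nlinarith [Real.sqrt_nonneg 2]
  have hE0 : 0 ≤ (1-r)^2 * ((3+2*s)*(1-r^2)^2 - 4*(1-r)^2) := by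
    have he : (3+2*s)*(1-r^2)^2 - 4*(1-r)^2 = (1-r)^2*((3+2*s)*(1+r)^2-4) := by ring
    have h1 : (0:ℝ) ≤ (3+2*s)*(1+r)^2-4 := by nlinarith [sq_nonneg r]
    rw [he]
    positivity
  have hE1 : 0 ≤ (1-r)^2 * ((3+2*s)*(1+r^2)^2 - 4*(1+r)^2) := by
    have h1 : (0:ℝ) ≤ (1+s)*(r-s+1)^2 := by positivity
    have h2 : (0:ℝ) ≤ (1+s)*(1+r^2)+2*(1+r) := by positivity
    have hfact : (3+2*s)*(1+r^2)^2 - 4*(1+r)^2 =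
        ((1+s)*(r-s+1)^2) * ((1+s)*(1+r^2)+2*(1+r)) := by
      linear_combination (-(s^2) - r^2*s^2 - 2*s + 2*r^3*s + 8*r + 2*r^3 + 2 + 3*r^2 - r^4) * hs
    rw [hfact]
    positivity
  have hy2 : y^2 = r^2 - x^2 := by linarith
  have hx2r : (0:ℝ) ≤ r^2 - x^2 := by nlinarith [sq_nonneg y]
  rw [hy2]
  linarith [mul_nonneg (sq_nonneg x) hE0, mul_nonneg hx2r hE1]

/-- Lemma 4.2 (Lemma `lem:ko1`): two-sided estimate for the distance from
`w(z) = (z + z⁻¹)/2` to the segment `[-1,1]`. -/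
theorem stmt_5 (z : ℂ) (hz : z ∈ ball (0:ℂ) 1) (hz0 : z ≠ 0) :
    (1/4) * (‖z^2 - 1‖ * (1 - ‖z‖) / ‖z‖) ≤
      Metric.infDist ((z + z⁻¹) / 2) (Complex.ofReal '' Icc (-1:ℝ) 1) ∧
    Metric.infDist ((z + z⁻¹) / 2) (Complex.ofReal '' Icc (-1:ℝ) 1) ≤
      ((1 + Real.sqrt 2) / 4) * (‖z^2 - 1‖ * (1 - ‖z‖) / ‖z‖) := by
  have hz1 : ‖z‖ < 1 := by simpa using hz
  set r := ‖z‖ with hrdef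
  have hrpos : 0 < r := norm_pos_iff.mpr hz0
  set x := z.re with hxdef
  set y := z.im with hydef
  have hxy : x^2 + y^2 = r^2 := by
    have h : r^2 = Complex.normSq z := by rw [hrdef, Complex.sq_norm]
    rw [h, Complex.normSq_apply]; ring
  have hz2 : ‖z^2-1‖^2 = (1-r^2)^2 + 4*y^2 := by
    rw [norm_sq_re_im]
    simp only [pow_two, Complex.sub_re, Complex.sub_im, Complex.mul_re, Complex.mul_im,
      Complex.one_re, Complex.one_im, ← hxdef, ← hydef]
    linear_combination (x^2+y^2+r^2-2) * hxy
  have hnum : ∀ t : ℝ, 4*r^4 * ‖(z+z⁻¹)/2 - (t:ℂ)‖^2 =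
      (2*r^2*t - x*(1+r^2))^2 + (1-r^2)^2*y^2 := by
    intro t
    have h1 : ((z+z⁻¹)/2 - (t:ℂ)) * (2*z) = z^2 - 2*(t:ℂ)*z + 1 := by
      field_simp; ring
    have h2 : ‖(z+z⁻¹)/2 - (t:ℂ)‖ * (2*r) = ‖z^2 - 2*(t:ℂ)*z + 1‖ := by
      rw [← h1, norm_mul]
      congr 1
      rw [norm_mul]
      simp [hrdef]
    have h3 : ‖z^2 - 2*(t:ℂ)*z + 1‖^2 = ((x*x-y*y) - 2*t*x + 1)^2 + (x*y+y*x - 2*t*y)^2 := by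
      rw [norm_sq_re_im]
      simp only [pow_two, Complex.add_re, Complex.add_im, Complex.sub_re, Complex.sub_im,
        Complex.mul_re, Complex.mul_im, Complex.one_re, Complex.one_im, Complex.ofReal_re,
        Complex.ofReal_im, Complex.re_ofNat, Complex.im_ofNat, ← hxdef, ← hydef]
      ring
    have h4 : 4*r^4*‖(z+z⁻¹)/2 - (t:ℂ)‖^2 = r^2 * (‖(z+z⁻¹)/2-(t:ℂ)‖*(2*r))^2 := by ring
    rw [h4, h2, h3]
    linear_combination (((2*t-x)^2+y^2)*r^2 - 1) * hxy
  have h1r : (0:ℝ) ≤ 1 - r := by linarith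
  have hQ : 0 ≤ ‖z^2-1‖*(1-r)/r := by positivity
  constructor
  · -- lower bound
    have hne : (Complex.ofReal '' Icc (-1:ℝ) 1).Nonempty :=
      ⟨0, ⟨0, by norm_num, by norm_num⟩⟩
    by_contra hcon
    push_neg at hcon
    obtain ⟨p, hp, hplt⟩ := (Metric.infDist_lt_iff hne).1 hcon
    obtain ⟨t, ht, rfl⟩ := hp
    have hk := key_lower r x y t hxy hrpos.le hz1.le ht.1 ht.2
    have hn := hnum t
    have hsq : ((1/4) * (‖z^2-1‖*(1-r)/r))^2 ≤ ‖(z+z⁻¹)/2 - (t:ℂ)‖^2 := by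
      have he : ((1/4) * (‖z^2-1‖*(1-r)/r))^2 = ‖z^2-1‖^2*(1-r)^2/(16*r^2) := by
        field_simp; ring
      rw [he, hz2, div_le_iff₀ (by positivity)]
      nlinarith [hk, hn, mul_pos hrpos hrpos]
    have hle : (1/4) * (‖z^2-1‖*(1-r)/r) ≤ ‖(z+z⁻¹)/2 - (t:ℂ)‖ :=
      le_of_pow_le_pow_left₀ two_ne_zero (norm_nonneg _) hsq
    rw [dist_eq_norm] at hplt
    linarith
  · -- upper bound
    have hxr : |x| ≤ r := by
      refine le_of_pow_le_pow_left₀ two_ne_zero hrpos.le ?_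
      rw [sq_abs]; nlinarith [sq_nonneg y]
    obtain ⟨hxr1, hxr2⟩ := abs_le.mp hxr
    have hmem : ((x/r : ℝ) : ℂ) ∈ Complex.ofReal '' Icc (-1:ℝ) 1 := by
      refine ⟨x/r, ⟨?_, ?_⟩, rfl⟩
      · rw [le_div_iff₀ hrpos]; linarith
      · rw [div_le_one hrpos]; linarith
    refine le_trans (Metric.infDist_le_dist_of_mem hmem) ?_
    rw [dist_eq_norm]
    have hn := hnum (x/r)
    have hval : (2*r^2*(x/r) - x*(1+r^2))^2 = x^2*(1-r)^4 := by
      field_simp; ring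
    have hk := key_upper r x y hxy hrpos.le hz1.le
    have hs : Real.sqrt 2 ^ 2 = 2 := Real.sq_sqrt (by norm_num)
    have hs0 : 0 ≤ Real.sqrt 2 := Real.sqrt_nonneg 2
    have hsq : ‖(z+z⁻¹)/2 - ((x/r : ℝ):ℂ)‖^2 ≤
        (((1+Real.sqrt 2)/4) * (‖z^2-1‖*(1-r)/r))^2 := by
      have he : (((1+Real.sqrt 2)/4) * (‖z^2-1‖*(1-r)/r))^2 =
          (3+2*Real.sqrt 2) * (((1-r^2)^2+4*y^2)*(1-r)^2) / (16*r^2) := by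
        have h0 : (((1+Real.sqrt 2)/4) * (‖z^2-1‖*(1-r)/r))^2 =
            ((1+Real.sqrt 2)^2) * (‖z^2-1‖^2*(1-r)^2) / (16*r^2) := by
          field_simp; ring
        rw [h0, hz2]
        have h2 : (1+Real.sqrt 2)^2 = 3+2*Real.sqrt 2 := by nlinarith [hs]
        rw [h2]
      rw [he, le_div_iff₀ (by positivity)]
      nlinarith [hk, hn, hval, mul_pos hrpos hrpos]
    refine le_of_pow_le_pow_left₀ two_ne_zero ?_ hsq
    positivity
end

section
/- For every z in the open unit disk U with z ≠ 0 such that |Re((z + z⁻¹)/2)| < 1, one has 1/√2 ≤ |Im z|·(1 + |z|)/(|z|·|z² − 1|) ≤ (1 + √2)/2. -/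
set_option maxHeartbeats 1000000

open Metric Set

/-- Estimate `1/√2 ≤ |Im z|(1+|z|)/(|z||z²−1|) ≤ (1+√2)/2` in the region where
`|Re((z+z⁻¹)/2)| < 1`. -/
theorem stmt_7 (z : ℂ) (hz : z ∈ ball (0:ℂ) 1) (hz0 : z ≠ 0)
    (hre : |((z + z⁻¹) / 2).re| < 1) :
    1 / Real.sqrt 2 ≤ |z.im| * (1 + ‖z‖) / (‖z‖ * ‖z^2 - 1‖) ∧
    |z.im| * (1 + ‖z‖) / (‖z‖ * ‖z^2 - 1‖) ≤ (1 + Real.sqrt 2) / 2 := by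
  have hr0 : 0 < ‖z‖ := norm_pos_iff.mpr hz0
  have hr1 : ‖z‖ < 1 := by simpa using hz
  set x := z.re with hx
  set y := z.im with hy
  set r := ‖z‖ with hr
  set Y := |y| with hY
  have hYnn : 0 ≤ Y := abs_nonneg _
  have hY2 : Y^2 = y^2 := sq_abs y
  have hr2 : r^2 = x^2 + y^2 := by
    rw [hr, Complex.sq_norm, Complex.normSq_apply]
    ring
  have hz21 : z^2 - 1 ≠ 0 := by
    intro h
    have h1 : z^2 = 1 := by linear_combination h
    have h2 : ‖z^2‖ = 1 := by rw [h1]; simp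
    rw [norm_pow] at h2
    nlinarith
  have hN0 : 0 < ‖z^2 - 1‖ := norm_pos_iff.mpr hz21
  set N := ‖z^2 - 1‖ with hN
  have hN2 : N^2 = (1 - r^2)^2 + 4*y^2 := by
    have h1 : N^2 = Complex.normSq (z^2 - 1) := by
      rw [hN, Complex.sq_norm]
    rw [h1, Complex.normSq_apply]
    simp [Complex.sub_re, Complex.sub_im, pow_two, Complex.mul_re,
      Complex.mul_im, ← hx, ← hy]
    nlinarith [hr2]
  have hrecalc : ((z + z⁻¹) / 2).re = (x + x / Complex.normSq z) / 2 := by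
    simp [Complex.div_re, Complex.add_re, Complex.inv_re, Complex.add_im, Complex.inv_im]
    rfl
  have hnsq : Complex.normSq z = r^2 := by
    rw [hr, Complex.sq_norm]
  rw [hrecalc, hnsq] at hre
  have hrr : (0:ℝ) < r^2 := by positivity
  have hdm : x / r^2 * r^2 = x := div_mul_cancel₀ x (ne_of_gt hrr)
  have hre2 : |x| * (1 + r^2) < 2 * r^2 := by
    have h := abs_lt.mp hre
    rcases abs_cases x with ⟨h1, h2⟩ | ⟨h1, h2⟩
    · rw [h1]
      have hb : x + x / r^2 < 2 := by linarith [h.2]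
      nlinarith [mul_lt_mul_of_pos_right hb hrr, hdm]
    · rw [h1]
      have ha : -2 < x + x / r^2 := by linarith [h.1]
      nlinarith [mul_lt_mul_of_pos_right ha hrr, hdm]
  have hxsq : x^2 * (1 + r^2)^2 < 4 * r^4 := by
    have := mul_self_lt_mul_self (by positivity) hre2
    nlinarith [sq_abs x]
  have hkey : r^2 * (1 - r^2)^2 ≤ Y^2 * (1 + r^2)^2 := by
    have hx2 : x^2 = r^2 - Y^2 := by linarith
    have h6 : x^2 * (1+r^2)^2 = (r^2 - Y^2) * (1+r^2)^2 := by rw [hx2]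
    nlinarith [hxsq, h6]
  have hYr : Y ≤ r := by
    rw [hY, hr]
    exact Complex.abs_im_le_norm z
  have hs2 : Real.sqrt 2 ^ 2 = 2 := Real.sq_sqrt (by norm_num)
  have hs0 : 0 < Real.sqrt 2 := Real.sqrt_pos.mpr (by norm_num)
  have h1r2 : (0:ℝ) < 1 + r^2 := by positivity
  constructor
  · rw [div_le_div_iff₀ hs0 (by positivity)]
    have h5 : 0 ≤ Y^2 * ((1 - r) * (r^3 + r^2 + 5*r + 1)) := by
      apply mul_nonneg (sq_nonneg Y)
      apply mul_nonneg (by linarith) (by positivity)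
    have hsq : (1 * (r * N))^2 ≤ (Y * (1 + r) * Real.sqrt 2)^2 := by
      have expand : (Y * (1 + r) * Real.sqrt 2)^2 = 2 * (Y^2 * (1+r)^2) := by
        rw [mul_pow, hs2]; ring
      rw [expand, one_mul, mul_pow, hN2]
      nlinarith [hkey, h5, hY2]
    have := pow_le_pow_iff_left₀ (by positivity : (0:ℝ) ≤ 1 * (r * N))
      (by positivity : (0:ℝ) ≤ Y * (1 + r) * Real.sqrt 2) two_ne_zero
    linarith [this.mp hsq]
  · rw [div_le_div_iff₀ (by positivity) (by norm_num : (0:ℝ) < 2)]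
    have step1 : Y * (1 + r^2) ≤ r * N := by
      have hsq : (Y * (1 + r^2))^2 ≤ (r * N)^2 := by
        rw [mul_pow, mul_pow, hN2]
        nlinarith [hY2, hr2, mul_nonneg (sq_nonneg x) (sq_nonneg (1 - r^2))]
      have := pow_le_pow_iff_left₀ (by positivity : (0:ℝ) ≤ Y * (1 + r^2))
        (by positivity : (0:ℝ) ≤ r * N) two_ne_zero
      exact this.mp hsq
    have step2 : 2 * (1 + r) ≤ (1 + Real.sqrt 2) * (1 + r^2) := by
      nlinarith [sq_nonneg ((1 + Real.sqrt 2) * r - 1), hs2, hs0]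
    have hm := mul_le_mul step2 step1 (by positivity) (by positivity)
    have hfin : (Y * (1 + r) * 2) * (1 + r^2) ≤ ((1 + Real.sqrt 2) * (r * N)) * (1 + r^2) := by
      nlinarith [hm]
    exact le_of_mul_le_mul_right hfin h1r2
end

section
/- For every z in the open unit disk U with z ≠ 0 such that Re((z + z⁻¹)/2) ≤ −1, one has (1/4)·|z² − 1|·(1 − |z|)/|z| ≤ (1/2)·|z + 1|²/|z| ≤ ((1 + √2)/4)·|z² − 1|·(1 − |z|)/|z|. -/
open Metric Set

lemma stmt_8_aux (r s a b x : ℝ) (hr0 : 0 < r) (hr1 : r < 1) (hs2 : s^2 = 2) (hs1 : 1 ≤ s)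
    (ha0 : 0 ≤ a) (hb0 : 0 ≤ b) (e1 : a^2 = r^2 + 2*x + 1) (e2 : b^2 = r^2 - 2*x + 1)
    (hx : x * (1 + r^2) ≤ -2 * r^2) (hx0 : x ≤ 0) :
    a ≤ (1+s)/2 * (b*(1-r)) := by
  have k1 : 2*(1+r) ≤ (1+s)*(1+r^2) := by nlinarith [sq_nonneg (r - (s-1))]
  have k2 : a^2 * (1+r^2) ≤ (1-r^2)^2 := by nlinarith
  have k3 : 1 + r^2 ≤ b^2 := by nlinarith
  have hC0 : 0 ≤ (1+s)/2 * (b*(1-r)) := by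
    have h1r : 0 ≤ 1 - r := by linarith
    positivity
  have k1sq : (2*(1+r))^2 ≤ ((1+s)*(1+r^2))^2 := by nlinarith [sq_nonneg r]
  have hsq : a^2 ≤ ((1+s)/2 * (b*(1-r)))^2 := by
    nlinarith [mul_le_mul_of_nonneg_right k3
        (mul_nonneg (by positivity : (0:ℝ) ≤ (1+s)^2/4) (sq_nonneg (1-r))),
      k1sq, sq_nonneg (1-r), sq_nonneg (1+r^2), mul_pos hr0 hr0, k2,
      mul_pos (mul_pos hr0 hr0) (mul_pos hr0 hr0)]
  exact le_of_pow_le_pow_left₀ two_ne_zero hC0 hsq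

lemma stmt_8_aux1 (r a b : ℝ) (hr0 : 0 < r) (hr1 : r < 1) (ha0 : 0 ≤ a)
    (hbub : b ≤ 1 + r) (halb : 1 - r ≤ a) :
    (1/4) * (a * b * (1 - r)) ≤ (1/2) * a^2 := by
  nlinarith [mul_le_mul_of_nonneg_left hbub ha0, mul_le_mul_of_nonneg_left halb ha0,
    mul_nonneg ha0 (by linarith : (0:ℝ) ≤ 1 - r)]

set_option maxHeartbeats 1000000 in
/-- Estimate in the region where `Re((z+z⁻¹)/2) ≤ −1`. -/
theorem stmt_8 (z : ℂ) (hz : z ∈ ball (0:ℂ) 1) (hz0 : z ≠ 0)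
    (hre : ((z + z⁻¹) / 2).re ≤ -1) :
    (1/4) * (‖z^2 - 1‖ * (1 - ‖z‖) / ‖z‖) ≤ (1/2) * (‖z + 1‖^2 / ‖z‖) ∧
    (1/2) * (‖z + 1‖^2 / ‖z‖) ≤ ((1 + Real.sqrt 2) / 4) * (‖z^2 - 1‖ * (1 - ‖z‖) / ‖z‖) := by
  have hzn : ‖z‖ < 1 := by simpa [mem_ball, dist_eq_norm] using hz
  have hr0 : 0 < ‖z‖ := norm_pos_iff.mpr hz0
  have hn : Complex.normSq z = ‖z‖^2 := by rw [← Complex.sq_norm]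
  have hx2 : z.re*z.re + z.im*z.im = ‖z‖^2 := by rw [← hn, Complex.normSq_apply]
  have hq0 : (0:ℝ) < ‖z‖^2 := by positivity
  simp only [Complex.add_re, Complex.div_re, Complex.inv_re, Complex.normSq_apply,
    Complex.add_im, Complex.inv_im] at hre
  norm_num [hx2] at hre
  have h2 : z.re + z.re / ‖z‖^2 ≤ -2 := by linarith
  have hdiv : z.re / ‖z‖^2 * ‖z‖^2 = z.re := div_mul_cancel₀ _ hq0.ne'
  have hx : z.re * (1 + ‖z‖^2) ≤ -2 * ‖z‖^2 := by
    nlinarith [mul_le_mul_of_nonneg_right h2 hq0.le]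
  have hxle0 : z.re ≤ 0 := by nlinarith [hq0]
  set r := ‖z‖ with hr
  set a := ‖z + 1‖ with ha
  set b := ‖z - 1‖ with hb
  have ha0 : 0 ≤ a := norm_nonneg _
  have hb0 : 0 ≤ b := norm_nonneg _
  have e1 : a^2 = r^2 + 2*z.re + 1 := by
    rw [ha, Complex.sq_norm, Complex.normSq_apply]
    simp only [Complex.add_re, Complex.add_im, Complex.one_re, Complex.one_im]
    nlinarith [hx2]
  have e2 : b^2 = r^2 - 2*z.re + 1 := by
    rw [hb, Complex.sq_norm, Complex.normSq_apply]
    simp only [Complex.sub_re, Complex.sub_im, Complex.one_re, Complex.one_im]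
    nlinarith [hx2]
  have e3 : ‖z^2 - 1‖ = a * b := by
    rw [ha, hb, ← norm_mul]; ring_nf
  have hbub : b ≤ 1 + r := by
    calc b ≤ ‖z‖ + ‖(1:ℂ)‖ := norm_sub_le z 1
    _ = 1 + r := by rw [norm_one]; ring
  have halb : 1 - r ≤ a := by
    have h := norm_add_le (z + 1) (-z)
    rw [show z + 1 + -z = (1:ℂ) by ring, norm_one, norm_neg] at h
    linarith
  set s := Real.sqrt 2 with hs
  have hs2 : s^2 = 2 := Real.sq_sqrt (by norm_num)
  have hs1 : 1 ≤ s := by nlinarith [Real.sqrt_nonneg 2]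
  have core1 := stmt_8_aux1 r a b hr0 hzn ha0 hbub halb
  have hac := stmt_8_aux r s a b z.re hr0 hzn hs2 hs1 ha0 hb0 e1 e2 hx hxle0
  have core2 : (1/2) * a^2 ≤ ((1+s)/4) * (a * b * (1-r)) := by
    have h := mul_le_mul_of_nonneg_left hac ha0
    calc (1/2) * a^2 = (1/2) * (a*a) := by ring
    _ ≤ (1/2) * (a * ((1+s)/2 * (b*(1-r)))) := by linarith
    _ = ((1+s)/4) * (a*b*(1-r)) := by ring
  constructor
  · rw [e3, show (1/4) * (a*b*(1-r)/r) = ((1/4)*(a*b*(1-r)))/r by ring,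
      show (1/2) * (a^2/r) = ((1/2)*a^2)/r by ring]
    exact div_le_div_of_nonneg_right core1 hr0.le
  · rw [e3, show ((1+s)/4) * (a*b*(1-r)/r) = (((1+s)/4)*(a*b*(1-r)))/r by ring,
      show (1/2) * (a^2/r) = ((1/2)*a^2)/r by ring]
    exact div_le_div_of_nonneg_right core2 hr0.le
end

section
/- Let p > 0 and γ > max(1 + p, 2p). Then the constant C_{γ,p} = (γ/2π) ∫_{1/γ}^1 ∫₀^{2π} (rγ − 1)(1−r)^{γ−2} / dist(w(r·e^{iθ}), [−1,1])^p dθ dr is finite, where w(z) = (z + z⁻¹)/2. -/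
open MeasureTheory Set Metric ENNReal

private theorem core_ineq10 (A B u s t : ℝ) (hA : 1 ≤ A) (hAB : A^2 - B^2 = 1) (hu : u^2 + s^2 = 1)
    (ht : |t| ≤ 1) : (A - 1)^2 ≤ (A*u - t)^2 + (B*s)^2 := by
  have hA0 : 0 < A := by linarith
  by_cases h : A * |u| ≤ 1
  · have hu2 : u^2 ≤ 1 / A^2 := by
      have h1 : (A*|u|)^2 ≤ 1 := by nlinarith [mul_nonneg hA0.le (abs_nonneg u)]
      have h2 : A^2 * u^2 ≤ 1 := by nlinarith [sq_abs u]
      rw [le_div_iff₀ (by positivity)]; linarith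
    have hs2 : B^2 / A^2 ≤ s^2 := by
      have hq : B^2 / A^2 = 1 - 1/A^2 := by field_simp; linarith
      rw [hq]; linarith [hu2]
    have h3 : B^4 / A^2 ≤ (B*s)^2 := by
      have := mul_le_mul_of_nonneg_left hs2 (sq_nonneg B)
      calc B^4 / A^2 = B^2 * (B^2 / A^2) := by ring
        _ ≤ B^2 * s^2 := this
        _ = (B*s)^2 := by ring
    have hfin : (A-1)^2 ≤ B^4 / A^2 := by
      rw [le_div_iff₀ (by positivity)]
      nlinarith [sq_nonneg (A-1)]
    nlinarith [sq_nonneg (A*u - t)]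
  · push_neg at h
    have h1 : A * |u| - 1 ≤ |A*u - t| := by
      have h0 := abs_sub_abs_le_abs_sub (A*u) t
      rw [abs_mul, abs_of_pos hA0] at h0; linarith
    have h2 : (A*|u| - 1)^2 ≤ (A*u - t)^2 := by
      have h0 : 0 ≤ A*|u| - 1 := by linarith
      calc (A*|u|-1)^2 ≤ |A*u - t|^2 := by nlinarith [abs_nonneg (A*u - t)]
        _ = (A*u - t)^2 := sq_abs _
    have hvu : |u| ≤ 1 := by nlinarith [sq_abs u, sq_nonneg s, abs_nonneg u]
    have key : (A-1)^2 ≤ (A*|u|-1)^2 + (B*s)^2 := by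
      nlinarith [abs_nonneg u, sq_abs u]
    linarith

private theorem jouk_lb10 (r θ : ℝ) (hr0 : 0 < r) (hr1 : r < 1) :
    (1 - r) * (|Real.sin θ| + (1 - r)) / 4 ≤
      Metric.infDist
        (((r : ℂ) * Complex.exp ((θ : ℂ) * Complex.I) +
          ((r : ℂ) * Complex.exp ((θ : ℂ) * Complex.I))⁻¹) / 2)
        (Complex.ofReal '' Icc (-1:ℝ) 1) := by
  have hr : r ≠ 0 := ne_of_gt hr0
  set A := (r + r⁻¹)/2 with hA
  set B := (r⁻¹ - r)/2 with hB
  set w := (((r : ℂ) * Complex.exp ((θ : ℂ) * Complex.I) +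
          ((r : ℂ) * Complex.exp ((θ : ℂ) * Complex.I))⁻¹) / 2) with hwdef
  have hz : (r : ℂ) * Complex.exp ((θ : ℂ) * Complex.I)
      = Complex.ofReal (r * Real.cos θ) + Complex.ofReal (r * Real.sin θ) * Complex.I := by
    rw [Complex.exp_mul_I, ← Complex.ofReal_cos, ← Complex.ofReal_sin]
    push_cast; ring
  have hzinv : ((r : ℂ) * Complex.exp ((θ : ℂ) * Complex.I))⁻¹
      = Complex.ofReal (Real.cos θ / r) - Complex.ofReal (Real.sin θ / r) * Complex.I := by
    rw [hz, inv_eq_of_mul_eq_one_right]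
    have hs := Real.sin_sq_add_cos_sq θ
    simp only [Complex.ext_iff, Complex.add_re, Complex.add_im, Complex.mul_re, Complex.mul_im,
      Complex.ofReal_re, Complex.ofReal_im, Complex.I_re, Complex.I_im, Complex.sub_re,
      Complex.sub_im, Complex.one_re, Complex.one_im]
    constructor <;> field_simp <;> nlinarith [hs]
  have hw : w = Complex.ofReal (A * Real.cos θ) - Complex.ofReal (B * Real.sin θ) * Complex.I := by
    rw [hwdef, hzinv, hz, hA, hB]
    rw [Complex.ext_iff]
    constructor <;>
      simp only [Complex.div_re, Complex.div_im, Complex.add_re, Complex.add_im, Complex.sub_re,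
        Complex.sub_im, Complex.mul_re, Complex.mul_im, Complex.ofReal_re, Complex.ofReal_im,
        Complex.I_re, Complex.I_im, Complex.normSq_apply, Complex.re_ofNat, Complex.im_ofNat] <;>
      field_simp <;> ring
  have hA1 : 1 ≤ A := by
    rw [hA]; rw [le_div_iff₀ (by norm_num : (0:ℝ) < 2)]
    nlinarith [mul_nonneg (inv_pos.mpr hr0).le (sq_nonneg (r-1)), mul_inv_cancel₀ hr]
  have hB0 : 0 ≤ B := by rw [hB]; have : r ≤ r⁻¹ := by nlinarith [inv_pos.mpr hr0, mul_inv_cancel₀ hr]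
                         linarith
  have hAB : A^2 - B^2 = 1 := by rw [hA, hB]; field_simp; ring
  have hAge : (1 - r)^2/2 ≤ A - 1 := by
    rw [hA]
    have h1 : r * r⁻¹ = 1 := mul_inv_cancel₀ hr
    nlinarith [inv_pos.mpr hr0, sq_nonneg (1-r), mul_pos hr0 (inv_pos.mpr hr0)]
  have hBge : 1 - r ≤ B := by
    rw [hB]
    have h1 : r * r⁻¹ = 1 := mul_inv_cancel₀ hr
    nlinarith [sq_nonneg (1-r), inv_pos.mpr hr0]
  have hne : (Complex.ofReal '' Icc (-1:ℝ) 1).Nonempty := ⟨1, ⟨1, by norm_num, by norm_num⟩⟩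
  have key : ∀ c : ℝ, (∀ t ∈ Icc (-1:ℝ) 1, c ≤ dist w (Complex.ofReal t)) →
      c ≤ Metric.infDist w (Complex.ofReal '' Icc (-1:ℝ) 1) := by
    intro c hc
    by_contra hlt
    push_neg at hlt
    rw [Metric.infDist_lt_iff hne] at hlt
    obtain ⟨y, hy, hd⟩ := hlt
    obtain ⟨t, ht, rfl⟩ := hy
    exact absurd (hc t ht) (not_le.2 hd)
  have hdsq : ∀ t : ℝ, (dist w (Complex.ofReal t))^2 = (A * Real.cos θ - t)^2 + (B * Real.sin θ)^2 := by
    intro t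
    rw [Complex.dist_eq, Complex.sq_norm, Complex.normSq_apply]
    simp only [hw, Complex.sub_re, Complex.sub_im, Complex.add_re, Complex.add_im, Complex.mul_re,
      Complex.mul_im, Complex.ofReal_re, Complex.ofReal_im, Complex.I_re, Complex.I_im]
    ring
  have hp1 : A - 1 ≤ Metric.infDist w (Complex.ofReal '' Icc (-1:ℝ) 1) := by
    apply key
    intro t ht
    have h1 : (A - 1)^2 ≤ (dist w (Complex.ofReal t))^2 := by
      rw [hdsq t]
      exact core_ineq10 A B (Real.cos θ) (Real.sin θ) t hA1 hAB
        (by rw [add_comm]; exact Real.sin_sq_add_cos_sq θ) (abs_le.mpr ⟨ht.1, ht.2⟩)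
    nlinarith [dist_nonneg (x := w) (y := (Complex.ofReal t)), hA1]
  have hp2 : B * |Real.sin θ| ≤ Metric.infDist w (Complex.ofReal '' Icc (-1:ℝ) 1) := by
    apply key
    intro t ht
    have h1 : |(w - Complex.ofReal t).im| ≤ dist w (Complex.ofReal t) := by
      rw [Complex.dist_eq]
      exact Complex.abs_im_le_norm _
    have h2 : (w - Complex.ofReal t).im = -(B * Real.sin θ) := by
      simp only [hw, Complex.sub_im, Complex.add_im, Complex.mul_im, Complex.mul_re,
        Complex.ofReal_im, Complex.ofReal_re, Complex.I_im, Complex.I_re]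
      ring
    rw [h2, abs_neg, abs_mul, abs_of_nonneg hB0] at h1
    exact h1
  have hD0 : 0 ≤ Metric.infDist w (Complex.ofReal '' Icc (-1:ℝ) 1) := Metric.infDist_nonneg
  have hs0 : 0 ≤ |Real.sin θ| := abs_nonneg _
  have hm : (1-r) * |Real.sin θ| ≤ B * |Real.sin θ| := mul_le_mul_of_nonneg_right hBge hs0
  nlinarith [hp1, hp2, hAge, hm, hD0]

private theorem sin_rpow_lb10 (q : ℝ) (hq0 : 0 < q) (θ : ℝ) (h1 : 0 < θ)
    (h2 : θ < 2*Real.pi) (hθ : θ ≠ Real.pi) :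
    |Real.sin θ| ^ (-q) ≤
      (Real.pi/2)^q * (|θ|^(-q) + |θ - Real.pi|^(-q) + |θ - 2*Real.pi|^(-q)) := by
  have hπ := Real.pi_pos
  have main : ∃ x : ℝ, 0 < x ∧ 2/Real.pi * x ≤ |Real.sin θ| ∧
      (x = |θ| ∨ x = |θ - Real.pi| ∨ x = |θ - 2*Real.pi|) := by
    rcases le_or_gt θ (Real.pi/2) with hc1 | hc1
    · refine ⟨θ, h1, ?_, Or.inl (abs_of_pos h1).symm⟩
      have := Real.mul_le_sin h1.le hc1
      have hs : 0 ≤ Real.sin θ := Real.sin_nonneg_of_nonneg_of_le_pi h1.le (by linarith)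
      rw [abs_of_nonneg hs]; exact this
    rcases lt_or_ge θ Real.pi with hc2 | hc2
    · refine ⟨Real.pi - θ, by linarith, ?_, Or.inr (Or.inl ?_)⟩
      · have := Real.mul_le_sin (x := Real.pi - θ) (by linarith) (by linarith)
        rw [Real.sin_pi_sub] at this
        have hs : 0 ≤ Real.sin θ := Real.sin_nonneg_of_nonneg_of_le_pi h1.le hc2.le
        rw [abs_of_nonneg hs]; exact this
      · rw [abs_of_nonpos (by linarith)]; ring
    have hc2' : Real.pi < θ := lt_of_le_of_ne hc2 (Ne.symm hθ)
    rcases le_or_gt θ (3*Real.pi/2) with hc3 | hc3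
    · refine ⟨θ - Real.pi, by linarith, ?_, Or.inr (Or.inl ?_)⟩
      · have := Real.mul_le_sin (x := θ - Real.pi) (by linarith) (by linarith)
        rw [Real.sin_sub_pi] at this
        calc 2/Real.pi * (θ - Real.pi) ≤ -Real.sin θ := this
          _ ≤ |Real.sin θ| := neg_le_abs _
      · rw [abs_of_nonneg (by linarith)]
    · refine ⟨2*Real.pi - θ, by linarith, ?_, Or.inr (Or.inr ?_)⟩
      · have := Real.mul_le_sin (x := 2*Real.pi - θ) (by linarith) (by linarith)
        rw [Real.sin_two_pi_sub] at this
        calc 2/Real.pi * (2*Real.pi - θ) ≤ -Real.sin θ := this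
          _ ≤ |Real.sin θ| := neg_le_abs _
      · rw [abs_of_nonpos (by linarith)]; ring
  obtain ⟨x, hx0, hxs, hxc⟩ := main
  have h2π : (0:ℝ) < 2/Real.pi := by positivity
  have hstep : |Real.sin θ| ^ (-q) ≤ (2/Real.pi * x) ^ (-q) :=
    Real.rpow_le_rpow_of_nonpos (by positivity) hxs (by linarith)
  have hsplit : (2/Real.pi * x) ^ (-q) = (Real.pi/2)^q * x^(-q) := by
    rw [Real.mul_rpow h2π.le hx0.le]
    congr 1
    rw [Real.rpow_neg h2π.le, ← Real.inv_rpow h2π.le, inv_div]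
  have hxle : x^(-q) ≤ |θ|^(-q) + |θ - Real.pi|^(-q) + |θ - 2*Real.pi|^(-q) := by
    have n1 : (0:ℝ) ≤ |θ|^(-q) := Real.rpow_nonneg (abs_nonneg _) _
    have n2 : (0:ℝ) ≤ |θ - Real.pi|^(-q) := Real.rpow_nonneg (abs_nonneg _) _
    have n3 : (0:ℝ) ≤ |θ - 2*Real.pi|^(-q) := Real.rpow_nonneg (abs_nonneg _) _
    rcases hxc with h | h | h <;> rw [h] <;> linarith
  calc |Real.sin θ| ^ (-q) ≤ (2/Real.pi * x) ^ (-q) := hstep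
    _ = (Real.pi/2)^q * x^(-q) := hsplit
    _ ≤ _ := mul_le_mul_of_nonneg_left hxle (Real.rpow_nonneg (by positivity) q)

private theorem intOn_abs_rpow10 {q : ℝ} (hq1 : q < 1) {c b : ℝ} (hc0 : 0 ≤ c) (hcb : c ≤ b) :
    IntegrableOn (fun θ : ℝ => |θ - c| ^ (-q)) (Ioo 0 b) volume := by
  have hq' : (-1:ℝ) < -q := by linarith
  have h1 : IntegrableOn (fun θ : ℝ => |θ - c| ^ (-q)) (Ioc 0 c) volume := by
    have base : IntervalIntegrable (fun x : ℝ => x ^ (-q)) volume 0 c :=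
      intervalIntegral.intervalIntegrable_rpow' hq'
    have comp : IntervalIntegrable (fun x : ℝ => (c - x) ^ (-q)) volume 0 c := by
      simpa using (base.comp_sub_left c).symm
    have := (intervalIntegrable_iff_integrableOn_Ioc_of_le hc0).mp comp
    refine this.congr_fun ?_ measurableSet_Ioc
    intro x hx
    simp only
    rw [abs_of_nonpos (by linarith [hx.2])]
    norm_num
  have h2 : IntegrableOn (fun θ : ℝ => |θ - c| ^ (-q)) (Ioc c b) volume := by
    have base : IntervalIntegrable (fun x : ℝ => x ^ (-q)) volume 0 (b - c) :=
      intervalIntegral.intervalIntegrable_rpow' hq'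
    have comp : IntervalIntegrable (fun x : ℝ => (x - c) ^ (-q)) volume c b := by
      simpa using base.comp_sub_right c
    have := (intervalIntegrable_iff_integrableOn_Ioc_of_le hcb).mp comp
    refine this.congr_fun ?_ measurableSet_Ioc
    intro x hx
    simp only
    rw [abs_of_nonneg (by linarith [hx.1])]
  exact (h1.union h2).mono_set (by
    intro x hx
    rcases le_or_gt x c with h | h
    · exact Or.inl ⟨hx.1, h⟩
    · exact Or.inr ⟨h, hx.2.le⟩)

private theorem intOn_one_sub_rpow10 {e : ℝ} (he : -1 < e) {a : ℝ} (ha : 0 ≤ a) :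
    IntegrableOn (fun r : ℝ => (1 - r) ^ e) (Ioo a 1) volume := by
  have base : IntervalIntegrable (fun x : ℝ => x ^ e) volume 0 1 :=
    intervalIntegral.intervalIntegrable_rpow' he
  have comp : IntervalIntegrable (fun x : ℝ => (1 - x) ^ e) volume 0 1 := by
    simpa using (base.comp_sub_left 1).symm
  have := (intervalIntegrable_iff_integrableOn_Ioc_of_le (by norm_num : (0:ℝ) ≤ 1)).mp comp
  exact this.mono_set (fun x hx => ⟨lt_of_le_of_lt ha hx.1, hx.2.le⟩)

/-- Finiteness of the constant `C_{γ,p}` of Theorem 4.3 for `γ > max(1+p, 2p)`. -/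
theorem stmt_10 (p γ : ℝ) (hp : 0 < p) (hγ : max (1 + p) (2 * p) < γ) :
    (∫⁻ r in Ioo (1/γ) 1, ∫⁻ θ in Ioo (0:ℝ) (2 * Real.pi),
        ENNReal.ofReal ((r * γ - 1) * (1 - r) ^ (γ - 2) /
          (Metric.infDist
            (((r : ℂ) * Complex.exp ((θ : ℂ) * Complex.I) +
              ((r : ℂ) * Complex.exp ((θ : ℂ) * Complex.I))⁻¹) / 2)
            (Complex.ofReal '' Icc (-1:ℝ) 1)) ^ p)) < ⊤ := by
  have hπ := Real.pi_pos
  have h1p : 1 + p < γ := lt_of_le_of_lt (le_max_left _ _) hγ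
  have h2p : 2 * p < γ := lt_of_le_of_lt (le_max_right _ _) hγ
  have hγ1 : 1 < γ := by linarith
  have hγ0 : 0 < γ := by linarith
  set L : ℝ := max 0 (1 + 2*p - γ) with hL
  have hL0 : 0 ≤ L := le_max_left _ _
  have hL1 : L < 1 := by
    rw [hL, max_lt_iff]; constructor <;> [norm_num; linarith]
  set q : ℝ := min p ((L + 1)/2) with hqdef
  have hq0 : 0 < q := lt_min hp (by linarith)
  have hq1 : q < 1 := lt_of_le_of_lt (min_le_right _ _) (by linarith)
  have hqp : q ≤ p := min_le_left _ _
  have hqlb : 1 + 2*p - γ < q := by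
    apply lt_min
    · linarith
    · have : 1 + 2*p - γ ≤ L := le_max_right _ _
      linarith
  set e : ℝ := γ - 2 - 2*p + q with hedef
  have he : (-1:ℝ) < e := by rw [hedef]; linarith
  set Kc : ℝ := γ * 4^(p:ℝ) * (Real.pi/2)^q with hKc
  have hKc0 : 0 ≤ Kc := by
    apply mul_nonneg (mul_nonneg hγ0.le (Real.rpow_nonneg (by norm_num) _))
      (Real.rpow_nonneg (by positivity) _)
  set G : ℝ → ℝ := fun θ => |θ|^(-q) + |θ - Real.pi|^(-q) + |θ - 2*Real.pi|^(-q) with hG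
  have hG0 : ∀ θ, 0 ≤ G θ := fun θ => by
    have n1 : (0:ℝ) ≤ |θ|^(-q) := Real.rpow_nonneg (abs_nonneg _) _
    have n2 : (0:ℝ) ≤ |θ - Real.pi|^(-q) := Real.rpow_nonneg (abs_nonneg _) _
    have n3 : (0:ℝ) ≤ |θ - 2*Real.pi|^(-q) := Real.rpow_nonneg (abs_nonneg _) _
    simp only [hG]; linarith
  -- finiteness of the θ-integral of G
  have hGint : IntegrableOn G (Ioo (0:ℝ) (2*Real.pi)) volume := by
    have i1 := intOn_abs_rpow10 hq1 (le_refl (0:ℝ)) (by positivity : (0:ℝ) ≤ 2*Real.pi)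
    have i2 := intOn_abs_rpow10 hq1 hπ.le (by linarith : Real.pi ≤ 2*Real.pi)
    have i3 := intOn_abs_rpow10 hq1 (by positivity : (0:ℝ) ≤ 2*Real.pi) (le_refl (2*Real.pi))
    have i1' : IntegrableOn (fun θ : ℝ => |θ|^(-q)) (Ioo (0:ℝ) (2*Real.pi)) volume := by
      simpa using i1
    exact (i1'.add i2).add i3
  have hJlt : (∫⁻ θ in Ioo (0:ℝ) (2*Real.pi), ENNReal.ofReal (G θ)) < ⊤ :=
    hGint.setLIntegral_lt_top
  set J : ℝ≥0∞ := ∫⁻ θ in Ioo (0:ℝ) (2*Real.pi), ENNReal.ofReal (G θ) with hJ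
  -- pointwise bound
  have hptw : ∀ r ∈ Ioo (1/γ) 1, ∀ θ ∈ Ioo (0:ℝ) (2*Real.pi), θ ≠ Real.pi →
      (r * γ - 1) * (1 - r) ^ (γ - 2) /
          (Metric.infDist
            (((r : ℂ) * Complex.exp ((θ : ℂ) * Complex.I) +
              ((r : ℂ) * Complex.exp ((θ : ℂ) * Complex.I))⁻¹) / 2)
            (Complex.ofReal '' Icc (-1:ℝ) 1)) ^ p ≤ Kc * (1 - r)^e * G θ := by
    intro r hr θ hθ hθπ
    have hr0 : 0 < r := lt_trans (by positivity) hr.1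
    have hr1 : r < 1 := hr.2
    have h1r : 0 < 1 - r := by linarith
    have hrγ : 1 < r * γ := by
      have h := (div_lt_iff₀ hγ0).mp hr.1
      nlinarith
    have hsin : Real.sin θ ≠ 0 := by
      rcases lt_or_ge θ Real.pi with h | h
      · exact ne_of_gt (Real.sin_pos_of_pos_of_lt_pi hθ.1 h)
      · have hπθ : Real.pi < θ := lt_of_le_of_ne h (Ne.symm hθπ)
        have : 0 < Real.sin (θ - Real.pi) :=
          Real.sin_pos_of_pos_of_lt_pi (by linarith) (by linarith [hθ.2])
        rw [Real.sin_sub_pi] at this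
        intro hcon; rw [hcon] at this; norm_num at this
    set s : ℝ := |Real.sin θ| with hs
    have hs0 : 0 < s := abs_pos.mpr hsin
    set D := Metric.infDist
            (((r : ℂ) * Complex.exp ((θ : ℂ) * Complex.I) +
              ((r : ℂ) * Complex.exp ((θ : ℂ) * Complex.I))⁻¹) / 2)
            (Complex.ofReal '' Icc (-1:ℝ) 1) with hD
    have hjl : (1 - r) * (s + (1 - r)) / 4 ≤ D := jouk_lb10 r θ hr0 hr1
    have hc0 : 0 < (1 - r) * (s + (1 - r)) / 4 := by positivity
    have hDp : ((1 - r) * (s + (1 - r)) / 4) ^ p ≤ D ^ p :=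
      Real.rpow_le_rpow hc0.le hjl hp.le
    -- lower bound on the power of the distance
    have hsum : (0:ℝ) < s + (1 - r) := by linarith
    have hpow : s^q * (1-r)^(p-q) ≤ (s + (1 - r)) ^ p := by
      have e1 : (s + (1 - r)) ^ p = (s + (1-r))^q * (s + (1-r))^(p - q) := by
        rw [← Real.rpow_add hsum]; ring_nf
      rw [e1]
      apply mul_le_mul
      · exact Real.rpow_le_rpow hs0.le (by linarith) hq0.le
      · exact Real.rpow_le_rpow h1r.le (by linarith) (by linarith)
      · exact Real.rpow_nonneg h1r.le _
      · exact Real.rpow_nonneg (by linarith) _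
    have hfact : ((1 - r) * (s + (1 - r)) / 4) ^ p
        = (1/4:ℝ)^p * (1-r)^p * (s + (1-r))^p := by
      rw [show (1 - r) * (s + (1 - r)) / 4 = (1/4) * ((1-r) * (s + (1-r))) by ring,
        Real.mul_rpow (by norm_num) (by positivity), Real.mul_rpow h1r.le hsum.le]
      ring
    have hBnd : (1/4:ℝ)^p * (1-r)^(2*p-q) * s^q ≤ D ^ p := by
      have : (1/4:ℝ)^p * (1-r)^(2*p-q) * s^q
          = (1/4:ℝ)^p * (1-r)^p * (s^q * (1-r)^(p-q)) := by
        rw [show (2*p - q : ℝ) = p + (p - q) by ring, Real.rpow_add h1r]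
        ring
      rw [this]
      refine le_trans ?_ hDp
      rw [hfact]
      apply mul_le_mul_of_nonneg_left hpow
      positivity
    have hBnd0 : (0:ℝ) < (1/4:ℝ)^p * (1-r)^(2*p-q) * s^q := by positivity
    have hN0 : 0 ≤ (r * γ - 1) * (1 - r) ^ (γ - 2) := by
      apply mul_nonneg (by linarith) (Real.rpow_nonneg h1r.le _)
    calc (r * γ - 1) * (1 - r) ^ (γ - 2) / D ^ p
        ≤ (r * γ - 1) * (1 - r) ^ (γ - 2) / ((1/4:ℝ)^p * (1-r)^(2*p-q) * s^q) := by
          apply div_le_div_of_nonneg_left hN0 hBnd0 hBnd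
      _ ≤ γ * (1 - r) ^ (γ - 2) / ((1/4:ℝ)^p * (1-r)^(2*p-q) * s^q) := by
          have hnum : (r * γ - 1) * (1 - r) ^ (γ - 2) ≤ γ * (1 - r) ^ (γ - 2) := by
            apply mul_le_mul_of_nonneg_right ?_ (Real.rpow_nonneg h1r.le _)
            nlinarith
          exact div_le_div_of_nonneg_right hnum hBnd0.le
      _ = γ * 4^(p:ℝ) * (1-r)^e * s^(-q) := by
          rw [div_eq_iff (ne_of_gt hBnd0)]
          have key1 : (4:ℝ)^(p:ℝ) * (1/4:ℝ)^p = 1 := by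
            rw [← Real.mul_rpow (by norm_num) (by norm_num)]
            norm_num
          have key2 : (1-r)^e * (1-r)^(2*p-q) = (1-r)^(γ-2) := by
            rw [← Real.rpow_add h1r]; congr 1; rw [hedef]; ring
          have key3 : s^(-q) * s^q = 1 := by
            rw [← Real.rpow_add hs0]; simp
          have expand : γ * 4^(p:ℝ) * (1-r)^e * s^(-q) * ((1/4:ℝ)^p * (1-r)^(2*p-q) * s^q)
              = γ * ((4:ℝ)^(p:ℝ) * (1/4:ℝ)^p) * ((1-r)^e * (1-r)^(2*p-q)) * (s^(-q) * s^q) := by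
            ring
          rw [expand, key1, key2, key3]
          ring
      _ ≤ γ * 4^(p:ℝ) * (1-r)^e * ((Real.pi/2)^q * G θ) := by
          apply mul_le_mul_of_nonneg_left
          · exact sin_rpow_lb10 q hq0 θ hθ.1 hθ.2 hθπ
          · positivity
      _ = Kc * (1 - r)^e * G θ := by rw [hKc]; ring
  -- reduce the double integral
  have hbound : (∫⁻ r in Ioo (1/γ) 1, ∫⁻ θ in Ioo (0:ℝ) (2 * Real.pi),
        ENNReal.ofReal ((r * γ - 1) * (1 - r) ^ (γ - 2) /
          (Metric.infDist
            (((r : ℂ) * Complex.exp ((θ : ℂ) * Complex.I) +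
              ((r : ℂ) * Complex.exp ((θ : ℂ) * Complex.I))⁻¹) / 2)
            (Complex.ofReal '' Icc (-1:ℝ) 1)) ^ p))
      ≤ ∫⁻ r in Ioo (1/γ) 1, ENNReal.ofReal (Kc * (1 - r)^e) * J := by
    apply lintegral_mono_ae
    filter_upwards [ae_restrict_mem measurableSet_Ioo] with r hr
    have step1 : (∫⁻ θ in Ioo (0:ℝ) (2 * Real.pi),
        ENNReal.ofReal ((r * γ - 1) * (1 - r) ^ (γ - 2) /
          (Metric.infDist
            (((r : ℂ) * Complex.exp ((θ : ℂ) * Complex.I) +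
              ((r : ℂ) * Complex.exp ((θ : ℂ) * Complex.I))⁻¹) / 2)
            (Complex.ofReal '' Icc (-1:ℝ) 1)) ^ p))
        ≤ ∫⁻ θ in Ioo (0:ℝ) (2 * Real.pi),
            ENNReal.ofReal (Kc * (1 - r)^e) * ENNReal.ofReal (G θ) := by
      apply lintegral_mono_ae
      have hne : ∀ᵐ (θ:ℝ) ∂(volume.restrict (Ioo (0:ℝ) (2*Real.pi))), θ ≠ Real.pi := by
        apply Filter.Eventually.filter_mono (ae_mono Measure.restrict_le_self)
        rw [ae_iff]
        have : {a : ℝ | ¬a ≠ Real.pi} = {Real.pi} := by ext x; simp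
        rw [this]
        exact measure_singleton _
      filter_upwards [ae_restrict_mem measurableSet_Ioo, hne] with θ hθ hθπ
      rw [← ENNReal.ofReal_mul (mul_nonneg hKc0 (Real.rpow_nonneg (by linarith [hr.2]) _))]
      exact ENNReal.ofReal_le_ofReal (hptw r hr θ hθ hθπ)
    refine le_trans step1 ?_
    rw [lintegral_const_mul' _ _ ENNReal.ofReal_ne_top]
  refine lt_of_le_of_lt hbound ?_
  rw [lintegral_mul_const' J _ hJlt.ne]
  apply ENNReal.mul_lt_top ?_ hJlt
  have : IntegrableOn (fun r : ℝ => Kc * (1 - r)^e) (Ioo (1/γ) 1) volume :=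
    (intOn_one_sub_rpow10 he (by positivity : (0:ℝ) ≤ 1/γ)).const_mul Kc
  exact this.setLIntegral_lt_top
end

section
/- For every p > 0 there exists a constant C₀ > 0 such that for all z in the open unit disk U with z ≠ 0, setting w(z) = (z + z⁻¹)/2, one has 1 / dist(w(z), [−1,1])^p ≤ C₀ / ((1 − |z|)^{1+p} · dist(z, {−1,1})^{2p}). -/
open Metric Set

lemma key_norms (w : ℂ) : ‖w‖^2 = w.re^2 + w.im^2 := by
  rw [Complex.sq_norm, Complex.normSq_apply]; ring

lemma hmain_aux {δ d A B : ℝ} (hδ : 0 < δ) (hd0 : 0 ≤ d) (hd2 : d ≤ 2)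
    (hA : δ ≤ A) (hB : δ ≤ B) (hdAB : d ≤ 2 * A + B) : δ * d ^ 2 / 12 ≤ A * B / 2 := by
  nlinarith [mul_le_mul_of_nonneg_left hdAB hδ.le,
    mul_nonneg (hδ.le.trans hA) (sub_nonneg.2 hB),
    mul_nonneg (hδ.le.trans hB) (sub_nonneg.2 hA),
    mul_nonneg (mul_nonneg hδ.le hd0) (sub_nonneg.2 hd2)]

lemma le_of_sq_le_sq' {u v : ℝ} (h : u^2 ≤ v^2) (hu : 0 ≤ u) (hv : 0 ≤ v) : u ≤ v := by
  nlinarith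

lemma key_bound (z : ℂ) (hz1 : ‖z‖ < 1) (hz0 : z ≠ 0) :
    (1 - ‖z‖) * (Metric.infDist z ({-1, 1} : Set ℂ))^2 / 12 ≤
      Metric.infDist ((z + z⁻¹) / 2) (Complex.ofReal '' Icc (-1:ℝ) 1) := by
  set δ := 1 - ‖z‖ with hδdef
  set d := Metric.infDist z ({-1, 1} : Set ℂ) with hddef
  have hδ : 0 < δ := by rw [hδdef]; linarith
  have hd0 : 0 ≤ d := Metric.infDist_nonneg
  have hd2 : d ≤ 2 := by
    calc d ≤ dist z 1 := Metric.infDist_le_dist_of_mem (by simp)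
    _ = ‖z - 1‖ := by rw [dist_eq_norm]
    _ ≤ ‖z‖ + ‖(1:ℂ)‖ := norm_sub_le _ _
    _ ≤ 2 := by rw [norm_one]; linarith
  have hne : (Complex.ofReal '' Icc (-1:ℝ) 1).Nonempty :=
    ⟨Complex.ofReal 1, ⟨1, by norm_num, rfl⟩⟩
  by_contra hcon
  push_neg at hcon
  rw [Metric.infDist_lt_iff hne] at hcon
  obtain ⟨y, ⟨x, hx, rfl⟩, hlt⟩ := hcon
  -- set up a, b
  set s := Real.sqrt (1 - x^2) with hsdef
  have hx2 : 0 ≤ 1 - x^2 := by nlinarith [hx.1, hx.2]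
  have hs0 : 0 ≤ s := Real.sqrt_nonneg _
  have hs2 : s^2 = 1 - x^2 := Real.sq_sqrt hx2
  set a : ℂ := ⟨x, s⟩ with hadef
  set b : ℂ := ⟨x, -s⟩ with hbdef
  have hab : a * b = 1 := by
    rw [Complex.ext_iff]
    constructor <;> simp [hadef, hbdef, Complex.mul_re, Complex.mul_im] <;> nlinarith
  have hsum : a + b = 2 * (x : ℂ) := by
    rw [Complex.ext_iff]; constructor <;> simp [hadef, hbdef] <;> ring
  have hna : ‖a‖ = 1 := by
    have := key_norms a
    simp only [hadef] at this
    nlinarith [norm_nonneg a]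
  have hnb : ‖b‖ = 1 := by
    have := key_norms b
    simp only [hbdef] at this
    nlinarith [norm_nonneg b]
  set A := ‖z - a‖ with hAdef
  set B := ‖z - b‖ with hBdef
  have hA : δ ≤ A := by
    have h := norm_sub_norm_le a z
    rw [hna, norm_sub_rev] at h
    linarith
  have hB : δ ≤ B := by
    have h := norm_sub_norm_le b z
    rw [hnb, norm_sub_rev] at h
    linarith
  -- ‖a - b‖ ≤ A + B
  have habd : ‖a - b‖ ≤ A + B := by
    calc ‖a - b‖ = ‖(z - b) - (z - a)‖ := by ring_nf
    _ ≤ ‖z - b‖ + ‖z - a‖ := norm_sub_le _ _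
    _ = A + B := by ring
  -- choose σ
  obtain ⟨σ, hσmem, hσ⟩ : ∃ σ : ℂ, σ ∈ ({-1, 1} : Set ℂ) ∧ ‖a - σ‖ ≤ ‖a - b‖ := by
    have hnab : ‖a - b‖^2 = 4 * s^2 := by
      have := key_norms (a - b)
      simp only [hadef, hbdef, Complex.sub_re, Complex.sub_im] at this
      rw [this]; ring_nf
    rcases le_total 0 x with hx0 | hx0
    · refine ⟨1, by simp, ?_⟩
      have h1 : ‖a - 1‖^2 = (x - 1)^2 + s^2 := by
        have := key_norms (a - 1)
        simp only [hadef, Complex.sub_re, Complex.sub_im, Complex.one_re, Complex.one_im] at this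
        rw [this]; ring_nf
      have : ‖a - 1‖^2 ≤ ‖a - b‖^2 := by rw [h1, hnab]; nlinarith [hx.2]
      exact le_of_sq_le_sq' this (norm_nonneg _) (norm_nonneg _)
    · refine ⟨-1, by simp, ?_⟩
      have h1 : ‖a - (-1)‖^2 = (x + 1)^2 + s^2 := by
        have := key_norms (a - (-1))
        simp only [hadef, Complex.sub_re, Complex.sub_im, Complex.neg_re, Complex.neg_im,
          Complex.one_re, Complex.one_im] at this
        rw [this]; ring_nf
      have : ‖a - (-1)‖^2 ≤ ‖a - b‖^2 := by rw [h1, hnab]; nlinarith [hx.1]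
      exact le_of_sq_le_sq' this (norm_nonneg _) (norm_nonneg _)
  have hdAB : d ≤ 2 * A + B := by
    calc d ≤ dist z σ := Metric.infDist_le_dist_of_mem hσmem
    _ = ‖z - σ‖ := by rw [dist_eq_norm]
    _ ≤ ‖z - a‖ + ‖a - σ‖ := by
        calc ‖z - σ‖ = ‖(z - a) + (a - σ)‖ := by ring_nf
        _ ≤ _ := norm_add_le _ _
    _ ≤ A + (A + B) := by have := hσ.trans habd; linarith
    _ = 2 * A + B := by ring
  -- the identity
  have h2z : (2 : ℂ) * z ≠ 0 := by simp [hz0]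
  have hiden : (z + z⁻¹) / 2 - (x : ℂ) = (z - a) * (z - b) / (2 * z) := by
    rw [eq_div_iff h2z]
    have hzz : z * z⁻¹ = 1 := mul_inv_cancel₀ hz0
    linear_combination hzz + z * hsum - hab
  have hdist : dist ((z + z⁻¹) / 2) ((x : ℂ)) = A * B / (2 * ‖z‖) := by
    rw [dist_eq_norm, hiden, norm_div, norm_mul, norm_mul]
    norm_num [hAdef, hBdef]
  have hz0' : 0 < ‖z‖ := norm_pos_iff.mpr hz0
  have hfrac : A * B / 2 ≤ A * B / (2 * ‖z‖) := by
    apply div_le_div_of_nonneg_left (mul_nonneg (norm_nonneg _) (norm_nonneg _)) (by linarith)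
    linarith
  have hmain : δ * d ^ 2 / 12 ≤ A * B / 2 := hmain_aux hδ hd0 hd2 hA hB hdAB
  rw [hdist] at hlt
  linarith

/-- The function `z ↦ dist(w(z),[-1,1])^{-p}` belongs to the class
`M({-1,1}, 1+p, 2p)`. -/
theorem stmt_11 (p : ℝ) (hp : 0 < p) :
    ∃ C₀ : ℝ, 0 < C₀ ∧ ∀ z ∈ ball (0:ℂ) 1, z ≠ 0 →
      1 / (Metric.infDist ((z + z⁻¹) / 2) (Complex.ofReal '' Icc (-1:ℝ) 1)) ^ p ≤
        C₀ / ((1 - ‖z‖) ^ (1 + p) * (Metric.infDist z ({-1, 1} : Set ℂ)) ^ (2 * p)) := by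
  refine ⟨12 ^ p, Real.rpow_pos_of_pos (by norm_num) p, ?_⟩
  intro z hz hz0
  rw [mem_ball, dist_zero_right] at hz
  set δ := 1 - ‖z‖ with hδdef
  set d := Metric.infDist z ({-1, 1} : Set ℂ) with hddef
  set D := Metric.infDist ((z + z⁻¹) / 2) (Complex.ofReal '' Icc (-1:ℝ) 1) with hDdef
  have hδ0 : 0 < δ := by rw [hδdef]; linarith
  have hδ1 : δ ≤ 1 := by rw [hδdef]; have := norm_nonneg z; linarith
  have hd0 : 0 < d := by
    rw [hddef]
    refine (IsClosed.notMem_iff_infDist_pos ?_ ⟨1, by simp⟩).mp ?_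
    · exact (Set.finite_singleton (1:ℂ)).insert (-1) |>.isClosed
    · intro h
      rcases h with h | h
      · rw [h] at hz; norm_num at hz
      · rw [h] at hz; norm_num at hz
  have hkey := key_bound z hz hz0
  have hq : 0 < δ * d ^ 2 / 12 := by positivity
  have hD0 : 0 < D := lt_of_lt_of_le hq hkey
  have h1 : (δ * d ^ 2 / 12) ^ p ≤ D ^ p := Real.rpow_le_rpow hq.le hkey hp.le
  have h2 : (δ * d ^ 2 / 12) ^ p = δ ^ p * d ^ (2 * p) / 12 ^ p := by
    rw [Real.div_rpow (by positivity) (by norm_num), Real.mul_rpow hδ0.le (by positivity)]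
    congr 1
    rw [← Real.rpow_natCast d 2, ← Real.rpow_mul hd0.le]
    norm_num
  have h3 : 1 / D ^ p ≤ 1 / (δ ^ p * d ^ (2 * p) / 12 ^ p) := by
    apply one_div_le_one_div_of_le
    · rw [← h2]; exact Real.rpow_pos_of_pos hq p
    · rw [← h2]; exact h1
  have h4 : 1 / (δ ^ p * d ^ (2 * p) / 12 ^ p) = 12 ^ p / (δ ^ p * d ^ (2 * p)) := by
    rw [one_div, inv_div]
  have h5 : δ ^ (1 + p) * d ^ (2 * p) ≤ δ ^ p * d ^ (2 * p) := by
    apply mul_le_mul_of_nonneg_right _ (Real.rpow_pos_of_pos hd0 _).le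
    exact Real.rpow_le_rpow_of_exponent_ge hδ0 hδ1 (by linarith)
  have h6 : (12:ℝ) ^ p / (δ ^ p * d ^ (2 * p)) ≤ 12 ^ p / (δ ^ (1 + p) * d ^ (2 * p)) := by
    apply div_le_div_of_nonneg_left (Real.rpow_pos_of_pos (by norm_num) p).le
    · exact mul_pos (Real.rpow_pos_of_pos hδ0 _) (Real.rpow_pos_of_pos hd0 _)
    · exact h5
  calc 1 / D ^ p ≤ 12 ^ p / (δ ^ p * d ^ (2 * p)) := by rw [← h4]; exact h3
  _ ≤ _ := h6
end

section
/- Let s < 0 be a real number and let z be in the open unit disk U with z ≠ 0. Set λ = s·((z + 1)/(z − 1))². Then λ ∉ [0,∞) and (1/4)·(|λ|/|s|)^{1/2}·|λ − s|·(1 − |z|²)/|z| ≤ dist(λ, [0,∞)) ≤ (|λ|/|s|)^{1/2}·|λ − s|·(1 − |z|²)/|z|. -/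
open Metric Set

private lemma norm_sq_complex (c : ℂ) : ‖c‖^2 = c.re^2 + c.im^2 := by
  rw [Complex.sq_norm, Complex.normSq_apply]; ring

private lemma key_algebra (A B W c d : ℝ) (hA : A ≠ 0) (hB : B ≠ 0) :
    W * (c * (B * A) * (d / B ^ 2) / (A / B)) = c * W * d := by
  field_simp

set_option maxHeartbeats 1000000 in
/-- Lemma 5.3 (Lemma `lem:hg`): two-sided estimate for the distance of
`λ = s((z+1)/(z−1))²` to `[0,∞)` via the Koebe distortion theorem. -/
theorem stmt_12 (s : ℝ) (hs : s < 0) (z : ℂ) (hz : z ∈ ball (0:ℂ) 1) (hz0 : z ≠ 0) :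
    (s : ℂ) * ((z + 1) / (z - 1)) ^ 2 ∉ Complex.ofReal '' Ici (0:ℝ) ∧
    (1/4) * Real.sqrt (‖(s : ℂ) * ((z + 1) / (z - 1)) ^ 2‖ / |s|) *
        (‖(s : ℂ) * ((z + 1) / (z - 1)) ^ 2 - (s : ℂ)‖ * (1 - ‖z‖^2) / ‖z‖) ≤
      Metric.infDist ((s : ℂ) * ((z + 1) / (z - 1)) ^ 2) (Complex.ofReal '' Ici (0:ℝ)) ∧
    Metric.infDist ((s : ℂ) * ((z + 1) / (z - 1)) ^ 2) (Complex.ofReal '' Ici (0:ℝ)) ≤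
      Real.sqrt (‖(s : ℂ) * ((z + 1) / (z - 1)) ^ 2‖ / |s|) *
        (‖(s : ℂ) * ((z + 1) / (z - 1)) ^ 2 - (s : ℂ)‖ * (1 - ‖z‖^2) / ‖z‖) := by
  have hz1 : ‖z‖ < 1 := by simpa using hz
  have hzm1 : z - 1 ≠ 0 := by
    intro h
    have hz1' : z = 1 := by linear_combination h
    rw [hz1'] at hz1; simp at hz1
  set w : ℂ := (z + 1) / (z - 1) with hw
  set L : ℂ := (s:ℂ) * w ^ 2 with hL
  set u := w.re with hu_def
  set v := w.im with hv_def
  set S := Complex.ofReal '' Ici (0:ℝ) with hS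
  have hSne : S.Nonempty := ⟨0, 0, self_mem_Ici, by simp⟩
  -- Re w < 0
  have hu : u < 0 := by
    have h1 : u = ((z.re+1)*(z.re-1) + z.im*z.im) / Complex.normSq (z-1) := by
      simp only [hu_def, hw, Complex.div_re, Complex.add_re, Complex.sub_re,
        Complex.add_im, Complex.sub_im, Complex.one_re, Complex.one_im]
      ring
    have h2 : (z.re+1)*(z.re-1) + z.im*z.im = ‖z‖^2 - 1 := by
      rw [norm_sq_complex]; ring
    have h3 : ‖z‖^2 - 1 < 0 := by nlinarith [norm_nonneg z]
    rw [h1, h2]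
    exact div_neg_of_neg_of_pos h3 (Complex.normSq_pos.2 hzm1)
  have hwne : w ≠ 0 := fun h => by rw [h] at hu_def; simp [hu_def] at hu
  have hW : (0:ℝ) < ‖w‖ := norm_pos_iff.mpr hwne
  have hW2 : ‖w‖^2 = u^2 + v^2 := by rw [norm_sq_complex]
  have huW : -u ≤ ‖w‖ := by
    have h := Complex.abs_re_le_norm w
    calc -u ≤ |u| := neg_le_abs u
    _ ≤ ‖w‖ := h
  have hvW : |v| ≤ ‖w‖ := by
    have h := Complex.abs_im_le_norm w
    exact h
  -- relations between w and z
  have hwm1 : w - 1 = 2/(z-1) := by rw [hw]; field_simp; norm_num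
  have hwp1 : w + 1 = 2*z/(z-1) := by rw [hw]; field_simp; ring
  have hwm1ne : w - 1 ≠ 0 := by
    rw [hwm1]; exact div_ne_zero two_ne_zero hzm1
  have hwp1ne : w + 1 ≠ 0 := by
    rw [hwp1]; exact div_ne_zero (mul_ne_zero two_ne_zero hz0) hzm1
  have hzw : z = (w+1)/(w-1) := by
    rw [hwp1, hwm1]
    field_simp
  have hA : (0:ℝ) < ‖w+1‖ := norm_pos_iff.mpr hwp1ne
  have hB : (0:ℝ) < ‖w-1‖ := norm_pos_iff.mpr hwm1ne
  have hzA : ‖z‖ = ‖w+1‖ / ‖w-1‖ := by rw [hzw, norm_div]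
  have hAB : ‖w-1‖^2 - ‖w+1‖^2 = -4*u := by
    rw [norm_sq_complex, norm_sq_complex]
    simp only [Complex.sub_re, Complex.sub_im, Complex.add_re, Complex.add_im,
      Complex.one_re, Complex.one_im, ← hu_def, ← hv_def]
    ring
  have h1z2 : 1 - ‖z‖^2 = (-4*u)/‖w-1‖^2 := by
    have hB2 : (‖w-1‖:ℝ)^2 ≠ 0 := by positivity
    rw [hzA, div_pow, ← hAB, sub_div, div_self hB2]
  -- norms of L
  have hsa : |s| = -s := abs_of_neg hs
  have hsne : |s| ≠ 0 := abs_ne_zero.mpr (ne_of_lt hs)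
  have hLnorm : ‖L‖ = |s| * ‖w‖^2 := by
    rw [hL, norm_mul, norm_pow, Complex.norm_real, Real.norm_eq_abs]
  have hLs : L - (s:ℂ) = (s:ℂ) * ((w-1)*(w+1)) := by rw [hL]; ring
  have hLsnorm : ‖L - (s:ℂ)‖ = |s| * (‖w-1‖ * ‖w+1‖) := by
    rw [hLs, norm_mul, norm_mul, Complex.norm_real, Real.norm_eq_abs]
  have hsqrt : Real.sqrt (‖L‖ / |s|) = ‖w‖ := by
    rw [hLnorm, mul_div_cancel_left₀ _ hsne, Real.sqrt_sq (norm_nonneg w)]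
  -- components of L
  have hLre : L.re = s*(u^2 - v^2) := by
    rw [hL]
    simp only [pow_two, Complex.mul_re, Complex.mul_im, Complex.ofReal_re,
      Complex.ofReal_im, ← hu_def, ← hv_def]
    ring
  have hLim : L.im = 2*s*u*v := by
    rw [hL]
    simp only [pow_two, Complex.mul_re, Complex.mul_im, Complex.ofReal_re,
      Complex.ofReal_im, ← hu_def, ← hv_def]
    ring
  clear_value v u L w S
  have hK : Real.sqrt (‖L‖ / |s|) * (‖L - (s:ℂ)‖ * (1 - ‖z‖^2) / ‖z‖)
      = 4 * |s| * ‖w‖ * (-u) := by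
    rw [hsqrt, hLsnorm, h1z2, hzA,
      key_algebra (‖w+1‖) (‖w-1‖) (‖w‖) (|s|) (-4*u) hA.ne' hB.ne']
    ring
  refine ⟨?_, ?_, ?_⟩
  · -- L ∉ S
    intro hmem
    rw [hS] at hmem
    obtain ⟨t, ht, hteq⟩ := hmem
    have him : L.im = 0 := by rw [← hteq]; simp
    have hre : 0 ≤ L.re := by rw [← hteq]; simpa using ht
    have h0 : 2*s*u*v = 0 := by rw [← hLim]; exact him
    have hsu : (0:ℝ) < 2*s*u := by nlinarith
    have hv0 : v = 0 := by
      rcases mul_eq_zero.mp h0 with h | h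
      · exact absurd h (ne_of_gt hsu)
      · exact h
    rw [hLre, hv0] at hre
    nlinarith
  · -- lower bound
    have hgoal : (1/4) * Real.sqrt (‖L‖ / |s|) * (‖L - (s:ℂ)‖ * (1 - ‖z‖^2) / ‖z‖)
        = |s| * ‖w‖ * (-u) := by rw [mul_assoc, hK]; ring
    rw [hgoal]
    refine le_of_not_gt fun hlt => ?_
    rw [infDist_lt_iff hSne] at hlt
    obtain ⟨y, hy, hd⟩ := hlt
    rw [hS] at hy
    obtain ⟨t, ht, rfl⟩ := hy
    have ht' : (0:ℝ) ≤ t := ht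
    have hdist : dist L ((t:ℝ):ℂ) = ‖L - (t:ℂ)‖ := by
      rw [Complex.dist_eq]
    rw [hdist] at hd
    have hd2 : ‖L - (t:ℂ)‖^2 = (L.re - t)^2 + L.im^2 := by
      rw [norm_sq_complex]; simp
    have hdn : (0:ℝ) ≤ ‖L - (t:ℂ)‖ := norm_nonneg _
    have hln : (0:ℝ) ≤ |s| * ‖w‖ * (-u) := by
      apply mul_nonneg (mul_nonneg (abs_nonneg s) (norm_nonneg w)); linarith
    rcases le_or_gt (v^2) (u^2) with hcase | hcase
    · -- Re L ≤ 0 : dist ≥ |L|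
      have hLW : (|s| * ‖w‖ * (-u))^2 = s^2*(u^2+v^2)*u^2 := by
        rw [hsa]; linear_combination (s^2*u^2) * hW2
      have hD2 : (|s| * ‖w‖ * (-u))^2 ≤ ‖L - (t:ℂ)‖^2 := by
        rw [hLW, hd2, hLre, hLim]
        nlinarith [mul_nonneg (mul_nonneg ht' (neg_nonneg.mpr hs.le))
            (by linarith : (0:ℝ) ≤ u^2 - v^2),
          mul_nonneg (mul_nonneg (sq_nonneg s) (by positivity : (0:ℝ) ≤ u^2+v^2))
            (sq_nonneg v), sq_nonneg t]
      nlinarith [hD2, hln, hdn, hd]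
    · -- dist ≥ |Im L|
      have h1 : |L.im| ≤ ‖L - (t:ℂ)‖ := by
        have h2 := Complex.abs_im_le_norm (L - (t:ℂ))
        simpa using h2
      have himabs : |L.im| = 2*(-s)*(-u)*|v| := by
        rw [hLim, abs_mul, abs_mul, abs_mul, abs_of_neg hs, abs_of_neg hu]
        norm_num
      have hWv : ‖w‖ ≤ 2*|v| := by nlinarith [hW2, sq_abs v, abs_nonneg v, hW]
      rw [himabs] at h1
      rw [hsa] at hd
      nlinarith [h1, hd, mul_nonneg (neg_nonneg.mpr hs.le) (neg_nonneg.mpr hu.le), hWv]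
  · -- upper bound
    rw [hK]
    rcases le_or_gt (v^2) (u^2) with hcase | hcase
    · have h0 : (0:ℂ) ∈ S := by rw [hS]; exact ⟨0, self_mem_Ici, by simp⟩
      refine le_trans (infDist_le_dist_of_mem h0) ?_
      rw [dist_zero_right, hLnorm]
      have hW4 : ‖w‖ ≤ -(4*u) := by nlinarith [hW2, hW]
      nlinarith [mul_nonneg (abs_nonneg s) (norm_nonneg w), hW4, abs_nonneg s, hW]
    · have hre : 0 < L.re := by rw [hLre]; nlinarith
      have hmem : ((L.re:ℝ):ℂ) ∈ S := by rw [hS]; exact ⟨L.re, hre.le, rfl⟩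
      refine le_trans (infDist_le_dist_of_mem hmem) ?_
      have hLI : L - ((L.re:ℝ):ℂ) = (L.im:ℝ) * Complex.I := by
        apply Complex.ext <;> simp
      have hdist : dist L ((L.re:ℝ):ℂ) = |L.im| := by
        rw [Complex.dist_eq, hLI]
        simp [map_mul, Complex.norm_real, Complex.norm_I]
      rw [hdist, hLim, abs_mul, abs_mul, abs_mul, abs_of_neg hs, abs_of_neg hu]
      have h2 : |(2:ℝ)| = 2 := by norm_num
      rw [h2]
      nlinarith [hvW, mul_nonneg (neg_nonneg.mpr hs.le) (neg_nonneg.mpr hu.le)]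
end

section
/- Let s < 0 be a real number. The map F : U → ℂ defined by F(z) = s·((z + 1)/(z − 1))² is injective on the open unit disk U, and its image F(U) equals ℂ ∖ [0,∞). -/
open Metric Set

private lemma aux_ne_one {z : ℂ} (hz : ‖z‖ < 1) : z - 1 ≠ 0 := by
  intro h
  rw [sub_eq_zero] at h
  simp [h] at hz

private lemma aux_re_neg {z : ℂ} (hz : ‖z‖ < 1) : ((z + 1) / (z - 1)).re < 0 := by
  have h1 : z - 1 ≠ 0 := aux_ne_one hz
  have hpos : 0 < Complex.normSq (z - 1) := Complex.normSq_pos.mpr h1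
  have hns : Complex.normSq z < 1 := by
    have := Complex.sq_norm z
    have habs : ‖z‖ < 1 := hz
    nlinarith [norm_nonneg z]
  rw [Complex.div_re, ← add_div]
  apply div_neg_of_neg_of_pos _ hpos
  simp only [Complex.add_re, Complex.add_im, Complex.sub_re, Complex.sub_im,
    Complex.one_re, Complex.one_im]
  have heq : (z.re + 1) * (z.re - 1) + (z.im + 0) * (z.im - 0) = Complex.normSq z - 1 := by
    rw [Complex.normSq_apply]; ring
  rw [heq]
  linarith

private lemma aux_norm_lt {u : ℂ} (hu : u.re < 0) : ‖(u + 1) / (u - 1)‖ < 1 := by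
  have h1 : u - 1 ≠ 0 := by
    intro h
    rw [sub_eq_zero] at h
    rw [h] at hu
    simp only [Complex.one_re] at hu
    linarith
  have hd : 0 < ‖u - 1‖ := norm_pos_iff.mpr h1
  rw [norm_div, div_lt_one hd]
  have hsq : Complex.normSq (u + 1) < Complex.normSq (u - 1) := by
    simp only [Complex.normSq_apply, Complex.add_re, Complex.add_im, Complex.sub_re,
      Complex.sub_im, Complex.one_re, Complex.one_im]
    nlinarith
  rw [Complex.norm_def, Complex.norm_def]
  exact Real.sqrt_lt_sqrt (Complex.normSq_nonneg _) hsq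

private lemma aux_invol {u : ℂ} (hu : u - 1 ≠ 0) :
    ((u + 1) / (u - 1) + 1) / ((u + 1) / (u - 1) - 1) = u := by
  have hnum : (u + 1) / (u - 1) + 1 = 2 * u / (u - 1) := by
    field_simp
    ring
  have hden : (u + 1) / (u - 1) - 1 = 2 / (u - 1) := by
    field_simp
    ring
  rw [hnum, hden]
  field_simp

private lemma aux_sqrt {v : ℂ} (hv : ¬(v.im = 0 ∧ v.re ≤ 0)) :
    ∃ u : ℂ, u.re < 0 ∧ u ^ 2 = v := by
  obtain ⟨u, hu⟩ : ∃ u : ℂ, u ^ 2 = v :=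
    ⟨v ^ ((2 : ℕ) : ℂ)⁻¹, Complex.cpow_nat_inv_pow v two_ne_zero⟩
  have him : v.im = 2 * u.re * u.im := by
    rw [← hu]; simp [pow_two, Complex.mul_im]; ring
  have hre : v.re = u.re * u.re - u.im * u.im := by
    rw [← hu]; simp [pow_two, Complex.mul_re]
  have hune : u.re ≠ 0 := by
    intro h
    exact hv ⟨by rw [him, h]; ring, by rw [hre, h]; nlinarith⟩
  rcases lt_or_gt_of_ne hune with h | h
  · exact ⟨u, h, hu⟩
  · exact ⟨-u, by simpa using h, by rw [neg_pow]; simpa using hu⟩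

/-- For `s < 0`, the map `z ↦ s((z+1)/(z−1))²` is a bijection from the open
unit disk onto `ℂ ∖ [0,∞)`. -/
theorem stmt_13 (s : ℝ) (hs : s < 0) :
    Set.InjOn (fun z : ℂ => (s : ℂ) * ((z + 1) / (z - 1)) ^ 2) (ball (0:ℂ) 1) ∧
    (fun z : ℂ => (s : ℂ) * ((z + 1) / (z - 1)) ^ 2) '' (ball (0:ℂ) 1) =
      (Complex.ofReal '' Ici (0:ℝ))ᶜ := by
  have hs0 : (s : ℂ) ≠ 0 := Complex.ofReal_ne_zero.mpr hs.ne
  constructor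
  · -- injectivity
    intro z1 hz1 z2 hz2 heq
    rw [mem_ball_zero_iff] at hz1 hz2
    simp only at heq
    have hsq : ((z1 + 1) / (z1 - 1)) ^ 2 = ((z2 + 1) / (z2 - 1)) ^ 2 :=
      mul_left_cancel₀ hs0 heq
    set a := (z1 + 1) / (z1 - 1) with ha
    set b := (z2 + 1) / (z2 - 1) with hb
    have hfac : (a - b) * (a + b) = 0 := by linear_combination hsq
    rcases mul_eq_zero.mp hfac with h | h
    · -- a = b
      have hab : a = b := sub_eq_zero.mp h
      have h1 : z1 - 1 ≠ 0 := aux_ne_one hz1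
      have h2 : z2 - 1 ≠ 0 := aux_ne_one hz2
      rw [ha, hb, div_eq_div_iff h1 h2] at hab
      linear_combination -hab / 2
    · -- a = -b : contradicts both having negative real part
      exfalso
      have ha' : a.re < 0 := aux_re_neg hz1
      have hb' : b.re < 0 := aux_re_neg hz2
      have : a = -b := by linear_combination h
      rw [this] at ha'
      simp only [Complex.neg_re] at ha'
      linarith
  · -- image
    ext w
    simp only [mem_image, mem_compl_iff, not_exists]
    constructor
    · rintro ⟨z, hz, rfl⟩
      rw [mem_ball_zero_iff] at hz
      rintro x ⟨hx, hEq⟩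
      set u := (z + 1) / (z - 1) with hu
      have hre : u.re < 0 := aux_re_neg hz
      have h2 : u ^ 2 = ((x / s : ℝ) : ℂ) := by
        have : (x : ℂ) = (s : ℂ) * u ^ 2 := hEq
        push_cast
        field_simp
        linear_combination -this
      have him : (u ^ 2).im = 0 := by rw [h2]; simp
      have hre2 : (u ^ 2).re = x / s := by rw [h2]; simp
      have hxs : x / s ≤ 0 := div_nonpos_of_nonneg_of_nonpos hx hs.le
      have him' : u.re * u.im = 0 := by
        have hh : (u ^ 2).im = 2 * (u.re * u.im) := by
          simp only [pow_two, Complex.mul_im]; ring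
        rw [him] at hh
        linarith
      have huim : u.im = 0 := by
        rcases mul_eq_zero.mp him' with h | h
        · linarith
        · exact h
      have : (u ^ 2).re = u.re * u.re - u.im * u.im := by
        simp [pow_two, Complex.mul_re]
      rw [hre2] at this
      rw [huim] at this
      nlinarith
    · intro hw
      have hw' : ¬(w.im = 0 ∧ 0 ≤ w.re) := by
        rintro ⟨h1, h2⟩
        exact hw w.re ⟨h2, by rw [Complex.ext_iff]; simp [h1]⟩
      set v := w / (s : ℂ) with hv
      have hwv : w = (s : ℂ) * v := by rw [hv]; field_simp
      have hvim : w.im = s * v.im := by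
        rw [hwv]; simp [Complex.mul_im]
      have hvre : w.re = s * v.re := by
        rw [hwv]; simp [Complex.mul_re]
      have hvcond : ¬(v.im = 0 ∧ v.re ≤ 0) := by
        rintro ⟨h1, h2⟩
        apply hw'
        constructor
        · rw [hvim, h1]; ring
        · rw [hvre]; nlinarith
      obtain ⟨u, hure, husq⟩ := aux_sqrt hvcond
      have hu1 : u - 1 ≠ 0 := by
        intro h
        rw [sub_eq_zero] at h
        rw [h] at hure
        simp only [Complex.one_re] at hure
        linarith
      refine ⟨(u + 1) / (u - 1), ?_, ?_⟩
      · rw [mem_ball_zero_iff]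
        exact aux_norm_lt hure
      · show (s : ℂ) * (((u + 1) / (u - 1) + 1) / ((u + 1) / (u - 1) - 1)) ^ 2 = w
        rw [aux_invol hu1, husq, ← hwv]
end

section
/- Let s < 0 be a real number and define C_s = 4·sup_{z ∈ U} (1 + |z|)/(|z − 1|² + |s|·|z + 1|²). Then C_s is finite and positive, and for every z in the open unit disk U with z ≠ 0, setting λ = s·((z + 1)/(z − 1))², one has 1 − |z| ≥ (1/(|s|^{1/2}·C_s)) · dist(λ, [0,∞)) / (|λ|^{1/2}·(1 + |λ|)). -/
open Metric Set

private lemma re_frac (z : ℂ) (hz : ‖z‖ < 1) :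
    ((z+1)/(z-1)).re * ‖z-1‖^2 = ‖z‖^2 - 1 := by
  have hz1 : z ≠ 1 := by rintro rfl; simp at hz
  have hns : Complex.normSq (z-1) ≠ 0 := by
    simpa [Complex.normSq_eq_zero, sub_eq_zero] using hz1
  have h1 : ‖z-1‖^2 = Complex.normSq (z-1) := by rw [← Complex.sq_norm]
  have h2 : ‖z‖^2 = z.re^2 + z.im^2 := by
    rw [Complex.sq_norm, Complex.normSq_apply]; ring
  rw [h1, h2, Complex.div_re]
  field_simp
  simp
  ring

private lemma denom_lb (s : ℝ) (z : ℂ) :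
    2 * min 1 |s| ≤ ‖z - 1‖^2 + |s| * ‖z + 1‖^2 := by
  have h1 : ‖z-1‖^2 = Complex.normSq (z-1) := by rw [← Complex.sq_norm]
  have h2 : ‖z+1‖^2 = Complex.normSq (z+1) := by rw [← Complex.sq_norm]
  have hm1 : min 1 |s| ≤ 1 := min_le_left _ _
  have hm2 : min 1 |s| ≤ |s| := min_le_right _ _
  have hm0 : 0 ≤ min 1 |s| := le_min zero_le_one (abs_nonneg s)
  have e1 : Complex.normSq (z-1) + Complex.normSq (z+1) = 2 * Complex.normSq z + 2 := by
    simp [Complex.normSq_apply]; ring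
  have n1 : 0 ≤ Complex.normSq (z-1) := Complex.normSq_nonneg _
  have n2 : 0 ≤ Complex.normSq (z+1) := Complex.normSq_nonneg _
  have n3 : 0 ≤ Complex.normSq z := Complex.normSq_nonneg _
  rw [h1, h2]
  nlinarith [mul_le_mul_of_nonneg_left hm1 n1, mul_le_mul_of_nonneg_left hm2 n2]

set_option maxHeartbeats 1000000 in
/-- The constant `C_s` of Theorem 5.2 is finite and positive, and yields the
lower bound `1 − |z| ≥ dist(λ,[0,∞)) / (√|s| C_s |λ|^{1/2} (1+|λ|))`. -/
theorem stmt_14 (s : ℝ) (hs : s < 0) :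
    BddAbove (Set.range (fun z : ball (0:ℂ) 1 =>
      (1 + ‖(z : ℂ)‖) / (‖(z : ℂ) - 1‖^2 + |s| * ‖(z : ℂ) + 1‖^2))) ∧
    0 < 4 * ⨆ z : ball (0:ℂ) 1,
      (1 + ‖(z : ℂ)‖) / (‖(z : ℂ) - 1‖^2 + |s| * ‖(z : ℂ) + 1‖^2) ∧
    ∀ z ∈ ball (0:ℂ) 1, z ≠ 0 →
      1 - ‖z‖ ≥
        (1 / (Real.sqrt |s| * (4 * ⨆ z' : ball (0:ℂ) 1,
          (1 + ‖(z' : ℂ)‖) / (‖(z' : ℂ) - 1‖^2 + |s| * ‖(z' : ℂ) + 1‖^2)))) *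
        (Metric.infDist ((s : ℂ) * ((z + 1) / (z - 1)) ^ 2) (Complex.ofReal '' Ici (0:ℝ)) /
          (Real.sqrt ‖(s : ℂ) * ((z + 1) / (z - 1)) ^ 2‖ *
            (1 + ‖(s : ℂ) * ((z + 1) / (z - 1)) ^ 2‖))) := by
  have hs0 : 0 < |s| := abs_pos.2 (ne_of_lt hs)
  have hm0 : 0 < min 1 |s| := lt_min one_pos hs0
  set f : ball (0:ℂ) 1 → ℝ := fun z =>
    (1 + ‖(z : ℂ)‖) / (‖(z : ℂ) - 1‖^2 + |s| * ‖(z : ℂ) + 1‖^2) with hf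
  -- boundedness
  have hbdd : BddAbove (Set.range f) := by
    refine ⟨2 / (2 * min 1 |s|), ?_⟩
    rintro x ⟨z, rfl⟩
    have hz1 : ‖(z:ℂ)‖ < 1 := mem_ball_zero_iff.1 z.2
    exact div_le_div₀ (by norm_num) (by linarith) (by positivity) (denom_lb s z)
  set M : ℝ := ⨆ z : ball (0:ℂ) 1, f z with hM
  -- value at each point is ≤ M
  have hle : ∀ z : ball (0:ℂ) 1, f z ≤ M := fun z => le_ciSup hbdd z
  have h0mem : (0:ℂ) ∈ ball (0:ℂ) 1 := by simp
  have hM0 : (1:ℝ) / (1 + |s|) ≤ M := by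
    have := hle ⟨0, h0mem⟩
    simpa [hf] using this
  have hMpos : 0 < M := lt_of_lt_of_le (by positivity) hM0
  have hCpos : 0 < 4 * M := by linarith
  refine ⟨hbdd, hCpos, ?_⟩
  intro z hz hz0
  have hz1 : ‖z‖ < 1 := by simpa using hz
  have hzn1 : z ≠ 1 := by rintro rfl; simp at hz1
  have hzp1 : z ≠ -1 := by rintro rfl; simp at hz1
  set d : ℝ := ‖z - 1‖ with hdd
  set e : ℝ := ‖z + 1‖ with hee
  have hd : 0 < d := by
    rw [hdd, norm_pos_iff, sub_ne_zero]; exact hzn1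
  have he : 0 < e := by
    rw [hee, norm_pos_iff]; intro h; exact hzp1 (by linear_combination h)
  set w : ℂ := (z + 1) / (z - 1) with hw
  have hwnorm : ‖w‖ = e / d := by rw [hw, norm_div]
  set l : ℂ := (s : ℂ) * w ^ 2 with hl
  have hlnorm : ‖l‖ = |s| * (e/d)^2 := by
    rw [hl, norm_mul, norm_pow, hwnorm, Complex.norm_real, Real.norm_eq_abs]
  set a : ℝ := -w.re with haa
  have ha : a * d^2 = 1 - ‖z‖^2 := by
    have := re_frac z hz1
    rw [haa]; rw [← hw] at this; nlinarith
  have haval : a = (1 - ‖z‖^2) / d^2 := by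
    rw [eq_div_iff (by positivity)]; exact ha
  have hapos : 0 < a := by
    rw [haval]
    apply div_pos (by nlinarith [norm_nonneg z]) (by positivity)
  have hwre : w.re < 0 := by rw [haa] at hapos; linarith
  have haw : a ≤ ‖w‖ := by
    calc a ≤ |w.re| := by rw [haa]; exact neg_le_abs _
    _ ≤ ‖w‖ := Complex.abs_re_le_norm w
    _ = ‖w‖ := rfl
  -- real and imaginary parts of l
  have hre : l.re = s * (w.re * w.re - w.im * w.im) := by
    rw [hl, sq]
    simp [Complex.mul_re, Complex.mul_im]
  have him : l.im = s * (w.re * w.im + w.im * w.re) := by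
    rw [hl, sq]
    simp [Complex.mul_re, Complex.mul_im]
  -- key infDist bound
  set D : ℝ := Metric.infDist l (Complex.ofReal '' Ici (0:ℝ)) with hD
  have hDbound : D ≤ 3 * |s| * a * ‖w‖ := by
    set p : ℝ := max l.re 0 with hp
    have hpmem : (p : ℂ) ∈ Complex.ofReal '' Ici (0:ℝ) :=
      ⟨p, by rw [hp]; exact Set.mem_Ici.2 (le_max_right _ _), rfl⟩
    have h1 : D ≤ dist l (p : ℂ) := Metric.infDist_le_dist_of_mem hpmem
    have h2 : dist l (p : ℂ) ≤ |l.re - p| + |l.im| := by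
      rw [Complex.dist_eq]
      calc ‖l - p‖ ≤ |(l - (p:ℂ)).re| + |(l - (p:ℂ)).im| :=
            Complex.norm_le_abs_re_add_abs_im _
        _ = |l.re - p| + |l.im| := by simp
    have h3 : |l.re - p| ≤ |s| * a^2 := by
      have hple : l.re ≤ p := le_max_left _ _
      rw [abs_sub_comm, abs_of_nonneg (by linarith)]
      rcases le_total l.re 0 with h | h
      · have : p = 0 := max_eq_right h
        rw [this]
        have : -l.re ≤ |s| * a^2 := by
          rw [hre, abs_of_neg hs, haa]
          nlinarith [sq_nonneg w.im]
        linarith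
      · have : p = l.re := max_eq_left h
        rw [this, sub_self]; positivity
    have h4 : |l.im| ≤ 2 * |s| * a * ‖w‖ := by
      have him2 : |l.im| = 2 * |s| * a * |w.im| := by
        rw [him, show w.re * w.im + w.im * w.re = (2 * w.re) * w.im by ring,
          abs_mul, abs_mul, abs_of_neg hs, abs_of_neg (by linarith : 2 * w.re < 0), haa]
        ring
      rw [him2]
      have h6 : |w.im| ≤ ‖w‖ := by
        exact Complex.abs_im_le_norm w
      have h7 := mul_le_mul_of_nonneg_left h6 (show (0:ℝ) ≤ 2 * |s| * a by positivity)
      calc 2 * |s| * a * |w.im| = 2 * |s| * a * |w.im| := rfl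
        _ ≤ 2 * |s| * a * ‖w‖ := h7
    have h5 : a^2 ≤ a * ‖w‖ := by
      rw [sq]; exact mul_le_mul_of_nonneg_left haw hapos.le
    calc D ≤ |l.re - p| + |l.im| := le_trans h1 h2
      _ ≤ |s| * a^2 + 2 * |s| * a * ‖w‖ := by linarith
      _ ≤ 3 * |s| * a * ‖w‖ := by
          have h8 := mul_le_mul_of_nonneg_left h5 (abs_nonneg s)
          calc |s| * a^2 + 2 * |s| * a * ‖w‖ ≤ |s| * (a * ‖w‖) + 2 * |s| * a * ‖w‖ := by
                linarith
            _ = 3 * |s| * a * ‖w‖ := by ring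
  -- lower bound on M from z itself
  have hMz : (1 + ‖z‖) / (d^2 + |s| * e^2) ≤ M := hle ⟨z, hz⟩
  set Q : ℝ := d^2 + |s| * e^2 with hQ
  have hQpos : 0 < Q := by positivity
  clear_value D a l w Q e d M f
  have hlam1 : 1 + ‖l‖ = Q / d^2 := by
    rw [hlnorm, hQ]
    field_simp
  -- main inequality
  have key : 3 * a ≤ (1 - ‖z‖) * ((4 * M) * (1 + ‖l‖)) := by
    have h1 : (1 - ‖z‖) * ((4 * ((1 + ‖z‖)/Q)) * (1 + ‖l‖)) ≤
        (1 - ‖z‖) * ((4 * M) * (1 + ‖l‖)) := by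
      have hlpos : 0 < 1 + ‖l‖ := by positivity
      apply mul_le_mul_of_nonneg_left _ (by linarith : (0:ℝ) ≤ 1 - ‖z‖)
      apply mul_le_mul_of_nonneg_right _ hlpos.le
      linarith
    have h2 : (1 - ‖z‖) * ((4 * ((1 + ‖z‖)/Q)) * (1 + ‖l‖)) = 4 * a := by
      rw [hlam1]
      rw [haval]
      field_simp
      ring
    linarith
  -- assemble
  have hsql : Real.sqrt ‖l‖ = Real.sqrt |s| * (e/d) := by
    rw [hlnorm, Real.sqrt_mul (abs_nonneg s), Real.sqrt_sq (by positivity)]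
  have hss : Real.sqrt |s| * Real.sqrt |s| = |s| := Real.mul_self_sqrt (abs_nonneg s)
  have hsqs : 0 < Real.sqrt |s| := Real.sqrt_pos.2 hs0
  rw [ge_iff_le]
  have heq : (1 / (Real.sqrt |s| * (4 * M))) * (D / (Real.sqrt ‖l‖ * (1 + ‖l‖))) =
      D / (|s| * (4 * M) * ((e/d) * (1 + ‖l‖))) := by
    rw [hsql, div_mul_div_comm, one_mul,
      show (Real.sqrt |s| * (4*M)) * ((Real.sqrt |s| * (e/d)) * (1+‖l‖)) =
        |s| * (4*M) * ((e/d)*(1+‖l‖)) by linear_combination (4*M*((e/d)*(1+‖l‖))) * hss]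
  rw [heq]
  rw [div_le_iff₀ (mul_pos (mul_pos hs0 hCpos) (mul_pos (div_pos he hd) (by positivity)))]
  calc D ≤ 3 * |s| * a * ‖w‖ := hDbound
    _ = (|s| * (e/d)) * (3 * a) := by rw [hwnorm]; ring
    _ ≤ (|s| * (e/d)) * ((1 - ‖z‖) * ((4 * M) * (1 + ‖l‖))) := by
        apply mul_le_mul_of_nonneg_left key (by positivity)
    _ = (1 - ‖z‖) * (|s| * (4 * M) * ((e/d) * (1 + ‖l‖))) := by ring
end

section
/- Let A be the bounded linear operator on ℓ²(ℤ) defined by (Au)(k) = u(k−1) + u(k+1). Then the spectrum of A equals the segment [−2,2] ⊂ ℂ, i.e. σ(A) = {x + 0i : −2 ≤ x ≤ 2}. -/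
open Metric Set

open scoped ENNReal InnerProductSpace
set_option maxHeartbeats 1000000

noncomputable section

namespace Stmt15Aux

abbrev H := lp (fun _ : ℤ => ℂ) 2

lemma two_pos_toReal : (0:ℝ) < (2 : ℝ≥0∞).toReal := by norm_num

lemma rpow_two_eq (x : ℝ) : x ^ ((2:ℝ≥0∞).toReal) = x ^ 2 := by
  rw [show ((2:ℝ≥0∞).toReal) = ((2:ℕ):ℝ) by norm_num, Real.rpow_natCast]

lemma memlp_shift (u : H) (m : ℤ) : Memℓp (fun k : ℤ => u (k + m)) 2 := by
  apply memℓp_gen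
  have h : Summable fun k : ℤ => ‖u k‖ ^ (2:ℝ≥0∞).toReal :=
    (memℓp_gen_iff two_pos_toReal).mp (lp.memℓp u)
  have heq : (fun k : ℤ => ‖u (k + m)‖ ^ (2:ℝ≥0∞).toReal)
      = (fun k : ℤ => ‖u k‖ ^ (2:ℝ≥0∞).toReal) ∘ (Equiv.addRight m) := rfl
  rw [heq]
  exact (Equiv.addRight m).summable_iff.mpr h

def T (m : ℤ) (u : H) : H := ⟨fun k => u (k + m), memlp_shift u m⟩

@[simp] lemma T_apply (m : ℤ) (u : H) (k : ℤ) : (T m u) k = u (k + m) := rfl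

lemma norm_T (m : ℤ) (u : H) : ‖T m u‖ = ‖u‖ := by
  rw [lp.norm_eq_tsum_rpow two_pos_toReal, lp.norm_eq_tsum_rpow two_pos_toReal u]
  congr 1
  exact (Equiv.addRight m).tsum_eq (fun k => ‖u k‖ ^ (2:ℝ≥0∞).toReal)

lemma inner_T (m : ℤ) (u v : H) : ⟪T m u, v⟫_ℂ = ⟪u, T (-m) v⟫_ℂ := by
  rw [lp.inner_eq_tsum, lp.inner_eq_tsum]
  have h := (Equiv.addRight m).tsum_eq (fun k : ℤ => ⟪u k, v (k - m)⟫_ℂ)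
  simp only [Equiv.coe_addRight, add_sub_cancel_right] at h
  calc ∑' k : ℤ, ⟪(T m u) k, v k⟫_ℂ = ∑' k : ℤ, ⟪u (k + m), v k⟫_ℂ := rfl
    _ = ∑' k : ℤ, ⟪u k, v (k - m)⟫_ℂ := h
    _ = ∑' k : ℤ, ⟪u k, (T (-m) v) k⟫_ℂ := by
        refine tsum_congr fun k => ?_
        rw [T_apply, sub_eq_add_neg]

lemma A_eq (A : H →L[ℂ] H)
    (hA : ∀ u : H, ∀ k : ℤ, (A u) k = u (k - 1) + u (k + 1)) (u : H) :
    A u = T (-1) u + T 1 u := by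
  apply lp.ext
  funext k
  rw [lp.coeFn_add]
  simp [hA u k, sub_eq_add_neg]

lemma sa (A : H →L[ℂ] H)
    (hA : ∀ u : H, ∀ k : ℤ, (A u) k = u (k - 1) + u (k + 1)) :
    IsSelfAdjoint A := by
  rw [ContinuousLinearMap.isSelfAdjoint_iff_isSymmetric]
  intro u v
  simp only [ContinuousLinearMap.coe_coe]
  rw [A_eq A hA u, A_eq A hA v, inner_add_left, inner_add_right, inner_T, inner_T]
  rw [neg_neg, add_comm]

lemma normA_le (A : H →L[ℂ] H)
    (hA : ∀ u : H, ∀ k : ℤ, (A u) k = u (k - 1) + u (k + 1)) :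
    ‖A‖ ≤ 2 := by
  refine A.opNorm_le_bound (by norm_num) fun u => ?_
  rw [A_eq A hA u]
  calc ‖T (-1) u + T 1 u‖ ≤ ‖T (-1) u‖ + ‖T 1 u‖ := norm_add_le _ _
    _ = 2 * ‖u‖ := by rw [norm_T, norm_T]; ring

instance : Nontrivial H := by
  refine nontrivial_of_ne (lp.single 2 0 1) 0 fun h => ?_
  have h0 : (lp.single (E := fun _ : ℤ => ℂ) 2 0 1) 0 = 1 := lp.single_apply_self 2 0 1
  rw [h] at h0
  simp at h0

lemma norm_sq_eq (f : H) : ‖f‖ ^ 2 = ∑' k : ℤ, ‖f k‖ ^ 2 := by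
  have h := lp.norm_rpow_eq_tsum (p := 2) two_pos_toReal f
  rw [rpow_two_eq] at h
  rw [h]
  exact tsum_congr fun k => rpow_two_eq _

end Stmt15Aux

open Stmt15Aux

/-- The spectrum of the discrete free Schrödinger operator on `ℓ²(ℤ)`
is the segment `[-2,2]`. -/
theorem stmt_15 (A : lp (fun _ : ℤ => ℂ) 2 →L[ℂ] lp (fun _ : ℤ => ℂ) 2)
    (hA : ∀ u : lp (fun _ : ℤ => ℂ) 2, ∀ k : ℤ, (A u) k = u (k - 1) + u (k + 1)) :
    spectrum ℂ A = Complex.ofReal '' Icc (-2:ℝ) 2 := by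
  apply Set.Subset.antisymm
  · -- spectrum ⊆ [-2,2]
    intro z hz
    have hre : z = z.re := (sa A hA).mem_spectrum_eq_re hz
    have hnorm : ‖z‖ ≤ ‖A‖ := spectrum.norm_le_norm_of_mem hz
    have h2 : ‖z‖ ≤ 2 := hnorm.trans (normA_le A hA)
    have habs : |z.re| ≤ 2 := by
      rw [hre] at h2
      simpa using h2
    exact ⟨z.re, abs_le.mp habs, hre.symm⟩
  · -- [-2,2] ⊆ spectrum
    rintro z ⟨x, hx, rfl⟩
    set θ := Real.arccos (x / 2) with hθ
    set a := Complex.exp (θ * Complex.I) with hadef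
    have ha : a ≠ 0 := Complex.exp_ne_zero _
    have ha1 : ‖a‖ = 1 := by
      rw [hadef]
      exact Complex.norm_exp_ofReal_mul_I θ
    have hcos : Real.cos θ = x / 2 :=
      Real.cos_arccos (by linarith [hx.1]) (by linarith [hx.2])
    have hz : (x:ℂ) = a + a⁻¹ := by
      have h1 : a + a⁻¹ = 2 * Complex.cos θ := by
        rw [hadef, ← Complex.exp_neg]
        rw [show -((θ:ℂ) * Complex.I) = ((-θ:ℝ):ℂ) * Complex.I by push_cast; ring]
        rw [Complex.exp_mul_I, Complex.exp_mul_I]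
        push_cast
        rw [Complex.cos_neg, Complex.sin_neg]
        ring
      rw [h1, ← Complex.ofReal_cos, hcos]
      push_cast
      ring
    rw [spectrum.mem_iff]
    intro hunit
    obtain ⟨U, hU⟩ := hunit
    have key : ∀ u : H, ‖u‖ ≤ ‖(↑U⁻¹ : H →L[ℂ] H)‖ *
        ‖(algebraMap ℂ (H →L[ℂ] H) (x:ℂ) - A) u‖ := by
      intro u
      have hBM : (↑U⁻¹ : H →L[ℂ] H) * (algebraMap ℂ (H →L[ℂ] H) (x:ℂ) - A) = 1 := by
        rw [← hU]; exact U.inv_mul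
      have h1 : (↑U⁻¹ : H →L[ℂ] H) ((algebraMap ℂ (H →L[ℂ] H) (x:ℂ) - A) u) = u := by
        have h2 := congrFun (congrArg DFunLike.coe hBM) u
        simpa using h2
      calc ‖u‖ = ‖(↑U⁻¹ : H →L[ℂ] H) ((algebraMap ℂ (H →L[ℂ] H) (x:ℂ) - A) u)‖ := by
            rw [h1]
        _ ≤ _ := ContinuousLinearMap.le_opNorm _ _
    obtain ⟨n, hn⟩ := exists_nat_gt (max 2 (4 * ‖(↑U⁻¹ : H →L[ℂ] H)‖ ^ 2))
    have hn2 : (2:ℝ) < n := lt_of_le_of_lt (le_max_left _ _) hn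
    have hnB : 4 * ‖(↑U⁻¹ : H →L[ℂ] H)‖ ^ 2 < n := lt_of_le_of_lt (le_max_right _ _) hn
    have hn2' : (2:ℤ) ≤ (n:ℤ) := by exact_mod_cast hn2.le
    -- the Weyl vector
    set w : ℤ → ℂ := fun k => if 0 ≤ k ∧ k < (n:ℤ) then a ^ k else 0 with hw
    have hwmem : Memℓp w 2 := by
      apply memℓp_gen
      apply summable_of_ne_finset_zero (s := Finset.Ico (0:ℤ) (n:ℤ))
      intro k hk
      rw [Finset.mem_Ico] at hk
      simp only [hw]
      rw [if_neg (by omega)]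
      simp
    set u : H := ⟨w, hwmem⟩ with hu
    have hu_apply : ∀ k, u k = w k := fun k => rfl
    have hnorm_a_zpow : ∀ m : ℤ, ‖a ^ m‖ = 1 := fun m => by
      rw [norm_zpow, ha1, one_zpow]
    -- ‖u‖² = n
    have hu_norm : ‖u‖ ^ 2 = n := by
      rw [norm_sq_eq]
      rw [tsum_eq_sum (s := Finset.Ico (0:ℤ) (n:ℤ)) (by
        intro k hk
        rw [Finset.mem_Ico] at hk
        rw [hu_apply]
        simp only [hw]
        rw [if_neg (by omega)]
        simp)]
      have hterm : ∀ k ∈ Finset.Ico (0:ℤ) (n:ℤ), ‖u k‖ ^ 2 = 1 := by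
        intro k hk
        rw [Finset.mem_Ico] at hk
        rw [hu_apply]
        simp only [hw]
        rw [if_pos (by omega), hnorm_a_zpow]
        norm_num
      rw [Finset.sum_congr rfl hterm, Finset.sum_const, Int.card_Ico]
      simp
    -- the image vector
    set v : ℤ → ℂ := fun k => x * w k - (w (k-1) + w (k+1)) with hv
    have hMu : ∀ k, ((algebraMap ℂ (H →L[ℂ] H) (x:ℂ) - A) u) k = v k := by
      intro k
      rw [ContinuousLinearMap.sub_apply, Algebra.algebraMap_eq_smul_one,
        ContinuousLinearMap.smul_apply, ContinuousLinearMap.one_apply]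
      rw [lp.coeFn_sub]
      simp only [Pi.sub_apply]
      rw [lp.coeFn_smul]
      simp only [Pi.smul_apply, smul_eq_mul]
      rw [hA u k]
    have keyrec : ∀ k : ℤ, (a + a⁻¹) * a ^ k = a ^ (k-1) + a ^ (k+1) := by
      intro k
      rw [zpow_sub_one₀ ha, zpow_add_one₀ ha]
      ring
    have hv0 : ∀ k ∉ ({-1, 0, (n:ℤ)-1, (n:ℤ)} : Finset ℤ), v k = 0 := by
      intro k hk
      simp only [Finset.mem_insert, Finset.mem_singleton] at hk
      push_neg at hk
      obtain ⟨h1, h2, h3, h4⟩ := hk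
      simp only [hv, hw]
      rcases lt_trichotomy k 0 with hlt | heq | hgt
      · rw [if_neg (by omega), if_neg (by omega), if_neg (by omega)]
        ring
      · omega
      · rcases lt_or_ge k (n:ℤ) with hkn | hkn
        · rw [if_pos (by omega), if_pos (by omega), if_pos (by omega)]
          rw [hz, keyrec]
          ring
        · rw [if_neg (by omega), if_neg (by omega), if_neg (by omega)]
          ring
    have hv1 : ∀ k ∈ ({-1, 0, (n:ℤ)-1, (n:ℤ)} : Finset ℤ), ‖v k‖ ≤ 1 := by
      intro k hk
      simp only [Finset.mem_insert, Finset.mem_singleton] at hk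
      rcases hk with rfl | rfl | rfl | rfl
      · have hval : v (-1) = -1 := by
          simp only [hv, hw]
          rw [if_neg (by omega), if_neg (by omega), if_pos (by omega)]
          norm_num
        rw [hval]; norm_num
      · have hval : v 0 = a⁻¹ := by
          simp only [hv, hw]
          rw [if_pos (by omega), if_neg (by omega), if_pos (by omega)]
          rw [hz]
          norm_num
        rw [hval, norm_inv, ha1]; norm_num
      · have hval : v ((n:ℤ)-1) = a ^ (n:ℤ) := by
          simp only [hv, hw]
          rw [if_pos (by omega), if_pos (by omega), if_neg (by omega)]
          rw [hz, keyrec ((n:ℤ)-1)]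
          rw [show (n:ℤ)-1+1 = (n:ℤ) by ring]
          ring
        rw [hval, hnorm_a_zpow]
      · have hval : v (n:ℤ) = -(a ^ ((n:ℤ)-1)) := by
          simp only [hv, hw]
          rw [if_neg (by omega), if_pos (by omega), if_neg (by omega)]
          ring
        rw [hval, norm_neg, hnorm_a_zpow]
    have hMu_norm : ‖(algebraMap ℂ (H →L[ℂ] H) (x:ℂ) - A) u‖ ^ 2 ≤ 4 := by
      rw [norm_sq_eq]
      rw [tsum_congr (fun k => by rw [hMu k])]
      rw [tsum_eq_sum (s := ({-1, 0, (n:ℤ)-1, (n:ℤ)} : Finset ℤ))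
        (by intro k hk; rw [hv0 k hk]; simp)]
      have hb : ∀ k ∈ ({-1, 0, (n:ℤ)-1, (n:ℤ)} : Finset ℤ), ‖v k‖ ^ 2 ≤ 1 := by
        intro k hk
        have h := hv1 k hk
        nlinarith [norm_nonneg (v k)]
      calc ∑ k ∈ ({-1, 0, (n:ℤ)-1, (n:ℤ)} : Finset ℤ), ‖v k‖ ^ 2
          ≤ ∑ _k ∈ ({-1, 0, (n:ℤ)-1, (n:ℤ)} : Finset ℤ), (1:ℝ) := Finset.sum_le_sum hb
        _ = ({-1, 0, (n:ℤ)-1, (n:ℤ)} : Finset ℤ).card := by simp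
        _ ≤ 4 := by
            have hcard : ({-1, 0, (n:ℤ)-1, (n:ℤ)} : Finset ℤ).card ≤ 4 := by
              have h1 := Finset.card_insert_le (-1:ℤ) ({0, (n:ℤ)-1, (n:ℤ)} : Finset ℤ)
              have h2 := Finset.card_insert_le (0:ℤ) ({(n:ℤ)-1, (n:ℤ)} : Finset ℤ)
              have h3 := Finset.card_insert_le ((n:ℤ)-1) ({(n:ℤ)} : Finset ℤ)
              simp only [Finset.card_singleton] at *
              omega
            exact_mod_cast hcard
    -- contradiction
    have hfin := key u
    have hsq : ‖u‖ ^ 2 ≤ ‖(↑U⁻¹ : H →L[ℂ] H)‖ ^ 2 *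
        ‖(algebraMap ℂ (H →L[ℂ] H) (x:ℂ) - A) u‖ ^ 2 := by
      nlinarith [norm_nonneg u, norm_nonneg (↑U⁻¹ : H →L[ℂ] H),
        norm_nonneg ((algebraMap ℂ (H →L[ℂ] H) (x:ℂ) - A) u)]
    rw [hu_norm] at hsq
    nlinarith [norm_nonneg (↑U⁻¹ : H →L[ℂ] H)]
end
end

section
/- Let A be the bounded linear operator on ℓ²(ℤ) defined by (Au)(k) = u(k−1) + u(k+1), and let δ₀ ∈ ℓ²(ℤ) be the sequence equal to 1 at index 0 and 0 elsewhere. Let (α_j)_{j∈ℤ} be a complex sequence with Σ_{j∈ℤ} |α_j|² < ∞, and let B = A + M where (Mu) = (Σ_{j∈ℤ} α_j·u(j))·δ₀. For z in the open unit disk with z ≠ 0, let u_z ∈ ℓ²(ℤ) be given by u_z(k) = z^{|k|}. Then B u_z = (z + z⁻¹)·u_z if and only if −1 + α₀·z + (α₁ + α₋₁ + 1)·z² + Σ_{j≥3} (α_{j−1} + α_{1−j})·z^j = 0. -/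
open Metric Set

lemma sumaux (α : ℤ → ℂ) (hα : Summable (fun j : ℤ => ‖α j‖ ^ 2)) {z : ℂ}
    (hz : ‖z‖ < 1) (g : ℕ → ℤ) (hg : Function.Injective g) (c : ℕ) :
    Summable (fun n : ℕ => α (g n) * z ^ (n + c)) := by
  apply Summable.of_norm
  have h2 : Summable (fun n : ℕ => ‖α (g n)‖ ^ 2) := hα.comp_injective hg
  have hgeo : Summable (fun n : ℕ => (‖z‖ ^ 2) ^ n) :=
    summable_geometric_of_lt_one (by positivity) (by nlinarith [norm_nonneg z])
  refine Summable.of_nonneg_of_le (fun n => norm_nonneg _) (fun n => ?_)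
    (((h2.add hgeo).mul_left (1/2)))
  have hzn : ‖z‖ ^ (n + c) ≤ ‖z‖ ^ n :=
    pow_le_pow_of_le_one (norm_nonneg z) hz.le (by omega)
  have h1 : ‖α (g n) * z ^ (n + c)‖ = ‖α (g n)‖ * ‖z‖ ^ (n + c) := by
    rw [norm_mul, norm_pow]
  rw [h1]
  have h3 : ‖α (g n)‖ * ‖z‖ ^ n ≤ 1/2 * (‖α (g n)‖ ^ 2 + (‖z‖ ^ 2) ^ n) := by
    have := sq_nonneg (‖α (g n)‖ - ‖z‖ ^ n)
    have : (‖z‖ ^ 2) ^ n = (‖z‖ ^ n) ^ 2 := by ring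
    nlinarith [norm_nonneg (α (g n)), pow_nonneg (norm_nonneg z) n]
  nlinarith [pow_nonneg (norm_nonneg z) n, norm_nonneg (α (g n))]

lemma shift2 (f : ℕ → ℂ) (hf : Summable f) :
    ∑' n, f n = f 0 + f 1 + ∑' n, f (n + 2) := by
  rw [Summable.tsum_eq_zero_add hf,
    Summable.tsum_eq_zero_add (show Summable (fun n => f (n + 1)) from (summable_nat_add_iff 1).2 hf)]
  rw [show (fun n => f (n + 1 + 1)) = fun n => f (n + 2) from rfl]
  ring

lemma shift3 (f : ℕ → ℂ) (hf : Summable f) :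
    ∑' n, f n = f 0 + f 1 + f 2 + ∑' n, f (n + 3) := by
  rw [shift2 f hf,
    Summable.tsum_eq_zero_add (show Summable (fun n => f (n + 2)) from (summable_nat_add_iff 2).2 hf)]
  rw [show (fun n => f (n + 2 + 1)) = fun n => f (n + 3) from rfl]
  ring

/-- `u_z(k) = z^{|k|}` is an eigenvector of `B = A + M` for the eigenvalue
`z + z⁻¹` if and only if `φ(z) = 0`, where `φ` is the power series built from
the coefficients of the rank-one perturbation `M`. -/
theorem stmt_16 (A M : lp (fun _ : ℤ => ℂ) 2 →L[ℂ] lp (fun _ : ℤ => ℂ) 2)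
    (hA : ∀ u : lp (fun _ : ℤ => ℂ) 2, ∀ k : ℤ, (A u) k = u (k - 1) + u (k + 1))
    (δ₀ : lp (fun _ : ℤ => ℂ) 2)
    (hδ₀ : ∀ k : ℤ, δ₀ k = if k = 0 then 1 else 0)
    (α : ℤ → ℂ) (hα : Summable (fun j : ℤ => ‖α j‖ ^ 2))
    (hM : ∀ u : lp (fun _ : ℤ => ℂ) 2, ∀ k : ℤ,
      (M u) k = (∑' j : ℤ, α j * u j) * δ₀ k)
    (z : ℂ) (hz : z ∈ ball (0:ℂ) 1) (hz0 : z ≠ 0)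
    (u : lp (fun _ : ℤ => ℂ) 2) (hu : ∀ k : ℤ, u k = z ^ k.natAbs) :
    (A + M) u = (z + z⁻¹) • u ↔
      -1 + α 0 * z + (α 1 + α (-1) + 1) * z ^ 2 +
        (∑' j : ℕ, if 3 ≤ j then (α ((j : ℤ) - 1) + α (1 - (j : ℤ))) * z ^ j else 0) = 0 := by
  have hz1 : ‖z‖ < 1 := by simpa using hz
  set S : ℂ := ∑' j : ℤ, α j * u j with hSdef
  -- Summability facts
  have hX : Summable (fun n : ℕ => α n * z ^ n) := by
    simpa using sumaux α hα hz1 (fun n => (n : ℤ)) (fun a b h => Nat.cast_injective h) 0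
  have hY : Summable (fun n : ℕ => α (-((n : ℤ) + 1)) * z ^ (n + 1)) :=
    sumaux α hα hz1 (fun n => -((n : ℤ) + 1)) (fun a b h => by simpa using h) 1
  have hnat : ∀ n : ℕ, ((-((n : ℤ) + 1)).natAbs) = n + 1 := fun n => by omega
  -- S as a concrete sum
  have hSu : S = ∑' j : ℤ, α j * z ^ j.natAbs := tsum_congr fun j => by rw [hu]
  have hSsplit : S = (∑' n : ℕ, α n * z ^ n) + ∑' n : ℕ, α (-((n : ℤ) + 1)) * z ^ (n + 1) := by
    rw [hSu, tsum_of_nat_of_neg_add_one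
      (hX.congr fun n => by simp)
      (hY.congr fun n => by rw [hnat n])]
    exact congrArg₂ (· + ·) (tsum_congr fun n => by simp) (tsum_congr fun n => by rw [hnat n])
  -- pieces
  set P : ℂ := ∑' n : ℕ, α ((n : ℤ) + 2) * z ^ (n + 3) with hPdef
  set Q : ℂ := ∑' n : ℕ, α (-((n : ℤ) + 2)) * z ^ (n + 3) with hQdef
  have hPsum : Summable (fun n : ℕ => α ((n : ℤ) + 2) * z ^ (n + 3)) :=
    sumaux α hα hz1 (fun n => (n : ℤ) + 2) (fun a b h => by simpa using h) 3
  have hQsum : Summable (fun n : ℕ => α (-((n : ℤ) + 2)) * z ^ (n + 3)) :=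
    sumaux α hα hz1 (fun n => -((n : ℤ) + 2)) (fun a b h => by simpa using h) 3
  -- z * S
  have hzS : z * S = α 0 * z + α 1 * z ^ 2 + α (-1) * z ^ 2 + P + Q := by
    rw [hSsplit, mul_add]
    have hX1 : Summable (fun n : ℕ => α n * z ^ (n + 1)) := by
      simpa using sumaux α hα hz1 (fun n => (n : ℤ)) (fun a b h => Nat.cast_injective h) 1
    have hY2 : Summable (fun n : ℕ => α (-((n : ℤ) + 1)) * z ^ (n + 2)) :=
      sumaux α hα hz1 (fun n => -((n : ℤ) + 1)) (fun a b h => by simpa using h) 2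
    have e1 : z * ∑' n : ℕ, α n * z ^ n = ∑' n : ℕ, α n * z ^ (n + 1) := by
      rw [← tsum_mul_left]; exact tsum_congr fun n => by ring
    have e2 : z * ∑' n : ℕ, α (-((n : ℤ) + 1)) * z ^ (n + 1)
        = ∑' n : ℕ, α (-((n : ℤ) + 1)) * z ^ (n + 2) := by
      rw [← tsum_mul_left]; exact tsum_congr fun n => by ring
    rw [e1, e2, shift2 _ hX1, Summable.tsum_eq_zero_add hY2]
    have eP : (∑' n : ℕ, α (↑(n + 2) : ℤ) * z ^ (n + 2 + 1)) = P := by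
      refine tsum_congr fun n => ?_
      push_cast
      ring_nf
    have eQ : (∑' n : ℕ, α (-((↑(n + 1) : ℤ) + 1)) * z ^ (n + 1 + 2)) = Q := by
      refine tsum_congr fun n => ?_
      push_cast
      ring_nf
    rw [eP, eQ]
    push_cast
    ring
  -- the tail sum
  have hT : (∑' j : ℕ, if 3 ≤ j then (α ((j : ℤ) - 1) + α (1 - (j : ℤ))) * z ^ j else 0)
      = P + Q := by
    have hfs : Summable (fun j : ℕ =>
        if 3 ≤ j then (α ((j : ℤ) - 1) + α (1 - (j : ℤ))) * z ^ j else 0) := by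
      rw [← summable_nat_add_iff 3]
      refine (hPsum.add hQsum).congr fun n => ?_
      rw [if_pos (by omega)]
      push_cast
      ring_nf
    rw [shift3 _ hfs]
    simp only [show ¬(3 ≤ 0) from by omega, show ¬(3 ≤ 1) from by omega,
      show ¬(3 ≤ 2) from by omega, if_false]
    rw [show (0:ℂ) + 0 + 0 = 0 from by ring, zero_add]
    rw [← Summable.tsum_add hPsum hQsum]
    refine tsum_congr fun n => ?_
    rw [if_pos (by omega)]
    push_cast
    ring_nf
  -- pointwise eigen-equation away from 0
  have key : ∀ k : ℤ, k ≠ 0 → u (k - 1) + u (k + 1) = (z + z⁻¹) * u k := by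
    intro k hk
    rw [hu, hu, hu]
    rcases lt_or_gt_of_ne hk with h | h
    · obtain ⟨m, hm⟩ : ∃ m : ℕ, k.natAbs = m + 1 := ⟨k.natAbs - 1, by omega⟩
      rw [show (k - 1).natAbs = m + 2 from by omega, show (k + 1).natAbs = m from by omega, hm]
      field_simp
      ring
    · obtain ⟨m, hm⟩ : ∃ m : ℕ, k.natAbs = m + 1 := ⟨k.natAbs - 1, by omega⟩
      rw [show (k - 1).natAbs = m from by omega, show (k + 1).natAbs = m + 2 from by omega, hm]
      field_simp
      ring
  have hu0 : u (0:ℤ) = 1 := by rw [hu]; norm_num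
  have hum1 : u (-1:ℤ) = z := by rw [hu]; norm_num
  have hu1 : u (1:ℤ) = z := by rw [hu]; norm_num
  -- the eigen-equation as a scalar condition
  have heigen : (A + M) u = (z + z⁻¹) • u ↔ z + z + S = z + z⁻¹ := by
    constructor
    · intro h
      have h0 : ((A + M) u) (0:ℤ) = ((z + z⁻¹) • u) (0:ℤ) := by rw [h]
      rw [ContinuousLinearMap.add_apply, lp.coeFn_add, Pi.add_apply, hA, hM, hδ₀,
        lp.coeFn_smul, Pi.smul_apply] at h0
      simp only [eq_self_iff_true, if_true, if_pos, mul_one, smul_eq_mul] at h0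
      rw [show (0:ℤ) - 1 = -1 from rfl, show (0:ℤ) + 1 = 1 from rfl, hum1, hu1, hu0] at h0
      rw [← hSdef] at h0
      linear_combination h0
    · intro h
      apply lp.ext
      funext k
      rw [ContinuousLinearMap.add_apply, lp.coeFn_add, Pi.add_apply, hA, hM, hδ₀,
        lp.coeFn_smul, Pi.smul_apply, smul_eq_mul, ← hSdef]
      by_cases hk : k = 0
      · subst hk
        rw [if_pos rfl, show (0:ℤ) - 1 = -1 from rfl, show (0:ℤ) + 1 = 1 from rfl,
          hum1, hu1, hu0]
        linear_combination h
      · rw [if_neg hk, mul_zero, add_zero]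
        exact key k hk
  rw [heigen]
  rw [hT]
  constructor
  · intro h
    have hS : S = z⁻¹ - z := by linear_combination h
    have hz' : z * S = 1 - z ^ 2 := by
      rw [hS]
      field_simp
    linear_combination hz' - hzS
  · intro h
    have hz' : z * S = 1 - z ^ 2 := by linear_combination hzS + h
    have hfin : S = z⁻¹ - z := by
      field_simp
      linear_combination hz'
    linear_combination hfin
end

section
/- Let (z_k)_{k∈ℕ} be a sequence in the open unit disk U with z_k ≠ 0 for all k, and set λ_k = z_k + z_k⁻¹. Then Σ_k dist(λ_k, [−2,2]) / |λ_k² − 4|^{1/2} < ∞ if and only if Σ_k (1 − |z_k|) < ∞. -/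
open Metric Set

private lemma factor_aux (z w : ℂ) (h0 : z ≠ 0) (hw : w * (starRingEnd ℂ) w = 1) :
    z + z⁻¹ - (w + (starRingEnd ℂ) w) = (z - w) * (z - (starRingEnd ℂ) w) / z := by
  field_simp
  linear_combination (-(1:ℂ)) * hw

private lemma factor2_aux (z w : ℂ) (h0 : z ≠ 0) (hw : w * (starRingEnd ℂ) w = 1) :
    w - z⁻¹ = w * (z - (starRingEnd ℂ) w) / z := by
  field_simp
  linear_combination hw

private lemma exists_w_aux (x : ℝ) (hx : x ∈ Icc (-2:ℝ) 2) :
    ∃ w : ℂ, w * (starRingEnd ℂ) w = 1 ∧ w + (starRingEnd ℂ) w = (x:ℂ) := by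
  obtain ⟨hx1, hx2⟩ := hx
  set s : ℝ := Real.sqrt (1 - (x/2)^2) with hs
  have hs2 : s^2 = 1 - (x/2)^2 := Real.sq_sqrt (by nlinarith)
  refine ⟨((x/2 : ℝ) : ℂ) + (s : ℂ) * Complex.I, ?_, ?_⟩
  · rw [Complex.mul_conj, Complex.normSq_add_mul_I]
    have : (x/2)^2 + s^2 = 1 := by rw [hs2]; ring
    rw [this]
    norm_num
  · simp only [map_add, map_mul, Complex.conj_ofReal, Complex.conj_I]
    push_cast
    ring

private lemma norm_w_aux {w : ℂ} (hw : w * (starRingEnd ℂ) w = 1) : ‖w‖ = 1 := by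
  have h := Complex.mul_conj w
  rw [hw] at h
  have h1 : Complex.normSq w = 1 := by exact_mod_cast h.symm
  have h2 : ‖w‖^2 = 1 := by rw [Complex.sq_norm]; exact h1
  nlinarith [norm_nonneg w]

private lemma lower_aux (z : ℂ) (h1 : ‖z‖ < 1) (h0 : z ≠ 0) (p : ℂ)
    (hp : p ∈ Complex.ofReal '' Icc (-2:ℝ) 2) :
    (1 - ‖z‖) * ‖z - z⁻¹‖ ≤ 2 * dist (z + z⁻¹) p := by
  obtain ⟨x, hx, rfl⟩ := hp
  obtain ⟨w, hw, hsum⟩ := exists_w_aux x hx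
  have hw1 : ‖w‖ = 1 := norm_w_aux hw
  have hcw1 : ‖(starRingEnd ℂ) w‖ = 1 := by rw [RCLike.norm_conj]; exact hw1
  set r := ‖z‖ with hr
  have hr0 : 0 < r := norm_pos_iff.mpr h0
  set A := ‖z - w‖ with hA
  set B := ‖z - (starRingEnd ℂ) w‖ with hB
  have hA0 : (0:ℝ) ≤ A := norm_nonneg _
  have hB0 : (0:ℝ) ≤ B := norm_nonneg _
  have hA1 : 1 - r ≤ A := by
    calc 1 - r = ‖w‖ - ‖z‖ := by rw [hw1]
    _ ≤ ‖w - z‖ := norm_sub_norm_le _ _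
    _ = A := by rw [hA, norm_sub_rev]
  have hB1 : 1 - r ≤ B := by
    calc 1 - r = ‖(starRingEnd ℂ) w‖ - ‖z‖ := by rw [hcw1]
    _ ≤ ‖(starRingEnd ℂ) w - z‖ := norm_sub_norm_le _ _
    _ = B := by rw [hB, norm_sub_rev]
  have hdist : dist (z + z⁻¹) (x:ℂ) = A * B / r := by
    rw [dist_eq_norm, show z + z⁻¹ - (x:ℂ) = (z - w) * (z - (starRingEnd ℂ) w) / z by
      rw [← hsum]; exact factor_aux z w h0 hw, norm_div, norm_mul]
  have hDle : ‖z - z⁻¹‖ ≤ A + B / r := by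
    have he : z - z⁻¹ = (z - w) + (w - z⁻¹) := by ring
    have h2 : ‖w - z⁻¹‖ = B / r := by
      rw [factor2_aux z w h0 hw, norm_div, norm_mul, hw1, one_mul]
    calc ‖z - z⁻¹‖ = ‖(z - w) + (w - z⁻¹)‖ := by rw [← he]
    _ ≤ ‖z - w‖ + ‖w - z⁻¹‖ := norm_add_le _ _
    _ = A + B / r := by rw [h2]
  have hDle' : r * ‖z - z⁻¹‖ ≤ r * A + B := by
    calc r * ‖z - z⁻¹‖ ≤ r * (A + B / r) := mul_le_mul_of_nonneg_left hDle hr0.le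
    _ = r * A + B := by field_simp
  have key : (1 - r) * ‖z - z⁻¹‖ * r ≤ 2 * (A * B) := by
    nlinarith [mul_le_mul_of_nonneg_left hDle' (by linarith : (0:ℝ) ≤ 1 - r),
      mul_le_mul_of_nonneg_right hB1 (mul_nonneg hr0.le hA0),
      mul_le_mul_of_nonneg_right h1.le (mul_nonneg hB0 hA0),
      mul_le_mul_of_nonneg_right hA1 hB0]
  rw [hdist]
  have h2 : 2 * (A * B / r) = (2 * (A * B)) / r := by ring
  rw [h2, le_div_iff₀ hr0]
  exact key

private lemma upper_aux (z : ℂ) (h1 : ‖z‖ < 1) (h0 : z ≠ 0) :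
    infDist (z + z⁻¹) (Complex.ofReal '' Icc (-2:ℝ) 2) ≤ 2 * ((1 - ‖z‖) * ‖z - z⁻¹‖) := by
  set r := ‖z‖ with hr
  have hr0 : 0 < r := norm_pos_iff.mpr h0
  have hrne : ((r:ℝ):ℂ) ≠ 0 := by exact_mod_cast hr0.ne'
  set x : ℝ := 2 * z.re / r with hx
  have hre : |z.re| ≤ r := by rw [hr]; exact Complex.abs_re_le_norm z
  have hre' := abs_le.mp hre
  have hxI : x ∈ Icc (-2:ℝ) 2 := by
    constructor
    · rw [hx, le_div_iff₀ hr0]; linarith [hre'.1]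
    · rw [hx, div_le_iff₀ hr0]; linarith [hre'.2]
  have hmem : ((x:ℝ):ℂ) ∈ Complex.ofReal '' Icc (-2:ℝ) 2 := ⟨x, hxI, rfl⟩
  refine (infDist_le_dist_of_mem hmem).trans ?_
  set w : ℂ := z / (r:ℂ) with hwdef
  have hzz : z * (starRingEnd ℂ) z = ((r^2 : ℝ) : ℂ) := by
    rw [Complex.mul_conj]
    norm_cast
    rw [hr, Complex.sq_norm]
  have hw : w * (starRingEnd ℂ) w = 1 := by
    have h2 : w * (starRingEnd ℂ) w = (z * (starRingEnd ℂ) z) / ((r:ℂ))^2 := by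
      rw [hwdef]; simp [map_div₀, Complex.conj_ofReal]; ring
    rw [h2, hzz, Complex.ofReal_pow]
    exact div_self (pow_ne_zero 2 hrne)
  have hsum : w + (starRingEnd ℂ) w = (x:ℂ) := by
    rw [hwdef]
    simp only [map_div₀, Complex.conj_ofReal]
    rw [← add_div, Complex.add_conj]
    rw [hx]
    push_cast
    field_simp
  have hdist : dist (z + z⁻¹) (x:ℂ) = ‖z - w‖ * ‖z - (starRingEnd ℂ) w‖ / r := by
    rw [dist_eq_norm, show z + z⁻¹ - (x:ℂ) = (z - w) * (z - (starRingEnd ℂ) w) / z by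
      rw [← hsum]; exact factor_aux z w h0 hw, norm_div, norm_mul]
  have hzw : ‖z - w‖ = 1 - r := by
    have he : z - w = z * (((r:ℂ) - 1) / (r:ℂ)) := by rw [hwdef]; field_simp
    rw [he, norm_mul, norm_div]
    have h3 : (r:ℂ) - 1 = ((r - 1 : ℝ) : ℂ) := by push_cast; ring
    rw [h3, Complex.norm_real, Complex.norm_real, Real.norm_eq_abs, Real.norm_eq_abs,
      abs_of_nonpos (by linarith : r - 1 ≤ 0), _root_.abs_of_nonneg hr0.le, ← hr]
    field_simp
    ring
  have hid : z * (z - (starRingEnd ℂ) w) = z^2 - (r:ℂ) := by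
    have h4 : z * (z - (starRingEnd ℂ) w) = z^2 - (z * (starRingEnd ℂ) z) / (r:ℂ) := by
      rw [hwdef]; simp [map_div₀, Complex.conj_ofReal]; ring
    rw [h4, hzz]
    push_cast
    field_simp
  have hBle : ‖z - (starRingEnd ℂ) w‖ ≤ 2 * ‖z^2 - 1‖ := by
    have h5 : r * ‖z - (starRingEnd ℂ) w‖ = ‖z^2 - (r:ℂ)‖ := by
      rw [← hid, norm_mul, ← hr]
    have h6 : ‖z^2 - (r:ℂ)‖ ≤ r * ‖z^2 - 1‖ + (1 - r) * r^2 := by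
      calc ‖z^2 - (r:ℂ)‖ = ‖(r:ℂ) * (z^2 - 1) + (1 - (r:ℂ)) * z^2‖ := by ring_nf
      _ ≤ ‖(r:ℂ) * (z^2 - 1)‖ + ‖(1 - (r:ℂ)) * z^2‖ := norm_add_le _ _
      _ = r * ‖z^2 - 1‖ + (1 - r) * r^2 := by
          have h7 : 1 - (r:ℂ) = ((1 - r : ℝ) : ℂ) := by push_cast; ring
          rw [norm_mul, norm_mul, norm_pow, ← hr, h7, Complex.norm_real, Complex.norm_real,
            Real.norm_eq_abs, Real.norm_eq_abs, _root_.abs_of_nonneg hr0.le,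
            _root_.abs_of_nonneg (by linarith : (0:ℝ) ≤ 1 - r)]
    have h8 : 1 - r^2 ≤ ‖z^2 - 1‖ := by
      calc 1 - r^2 = ‖(1:ℂ)‖ - ‖z^2‖ := by rw [norm_one, norm_pow, ← hr]
      _ ≤ ‖1 - z^2‖ := norm_sub_norm_le _ _
      _ = ‖z^2 - 1‖ := by rw [norm_sub_rev]
    have h9 : (1 - r) * r^2 ≤ r * ‖z^2 - 1‖ := by nlinarith
    have h10 : r * ‖z - (starRingEnd ℂ) w‖ ≤ r * (2 * ‖z^2 - 1‖) := by
      rw [h5]; nlinarith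
    exact le_of_mul_le_mul_left h10 hr0
  have hDval : ‖z - z⁻¹‖ = ‖z^2 - 1‖ / r := by
    have he : z - z⁻¹ = (z^2 - 1) / z := by field_simp
    rw [he, norm_div, ← hr]
  rw [hdist, hzw, hDval]
  rw [div_le_iff₀ hr0]
  have hnn : (0:ℝ) ≤ 1 - r := by linarith
  calc (1 - r) * ‖z - (starRingEnd ℂ) w‖ ≤ (1 - r) * (2 * ‖z^2 - 1‖) :=
        mul_le_mul_of_nonneg_left hBle hnn
  _ = 2 * ((1 - r) * (‖z^2 - 1‖ / r)) * r := by field_simp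

/-- For `λ_k = z_k + z_k⁻¹` with `z_k` in the unit disk, the Blaschke-type
condition on `λ_k` relative to `[-2,2]` is equivalent to `Σ (1 − |z_k|) < ∞`. -/
theorem stmt_17 (z : ℕ → ℂ) (hz : ∀ k, z k ∈ ball (0:ℂ) 1) (hz0 : ∀ k, z k ≠ 0) :
    Summable (fun k : ℕ =>
      Metric.infDist (z k + (z k)⁻¹) (Complex.ofReal '' Icc (-2:ℝ) 2) /
        Real.sqrt ‖(z k + (z k)⁻¹) ^ 2 - 4‖) ↔
    Summable (fun k : ℕ => 1 - ‖z k‖) := by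
  have hz1 : ∀ k, ‖z k‖ < 1 := by
    intro k
    have := hz k
    rwa [mem_ball, dist_zero_right] at this
  have hD0 : ∀ k, 0 < ‖z k - (z k)⁻¹‖ := by
    intro k
    rw [norm_pos_iff]
    intro h
    have h2 : z k * z k = 1 := by
      have h3 := sub_eq_zero.mp h
      have h4 : z k * z k = z k * (z k)⁻¹ := by rw [← h3]
      rw [mul_inv_cancel₀ (hz0 k)] at h4
      exact h4
    have h5 : ‖z k‖ * ‖z k‖ = 1 := by rw [← norm_mul, h2, norm_one]
    nlinarith [hz1 k, norm_nonneg (z k)]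
  have hsq : ∀ k, Real.sqrt ‖(z k + (z k)⁻¹) ^ 2 - 4‖ = ‖z k - (z k)⁻¹‖ := by
    intro k
    have hid : (z k + (z k)⁻¹) ^ 2 - 4 = (z k - (z k)⁻¹) ^ 2 := by
      have hinv : z k * (z k)⁻¹ = 1 := mul_inv_cancel₀ (hz0 k)
      linear_combination (4:ℂ) * hinv
    rw [hid, norm_pow, Real.sqrt_sq (norm_nonneg _)]
  set f := fun k : ℕ =>
      Metric.infDist (z k + (z k)⁻¹) (Complex.ofReal '' Icc (-2:ℝ) 2) /
        Real.sqrt ‖(z k + (z k)⁻¹) ^ 2 - 4‖ with hf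
  have hne : (Complex.ofReal '' Icc (-2:ℝ) 2).Nonempty :=
    ⟨(0:ℂ), ⟨(0:ℝ), by constructor <;> norm_num, rfl⟩⟩
  have hfle : ∀ k, f k ≤ 2 * (1 - ‖z k‖) := by
    intro k
    rw [hf]
    simp only
    rw [hsq k, div_le_iff₀ (hD0 k)]
    calc Metric.infDist (z k + (z k)⁻¹) (Complex.ofReal '' Icc (-2:ℝ) 2)
        ≤ 2 * ((1 - ‖z k‖) * ‖z k - (z k)⁻¹‖) := upper_aux (z k) (hz1 k) (hz0 k)
    _ = 2 * (1 - ‖z k‖) * ‖z k - (z k)⁻¹‖ := by ring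
  have hfge : ∀ k, 1 - ‖z k‖ ≤ 2 * f k := by
    intro k
    rw [hf]
    simp only
    rw [hsq k]
    have hlow : (1 - ‖z k‖) * ‖z k - (z k)⁻¹‖ ≤
        2 * Metric.infDist (z k + (z k)⁻¹) (Complex.ofReal '' Icc (-2:ℝ) 2) := by
      have h2 : (1 - ‖z k‖) * ‖z k - (z k)⁻¹‖ / 2 ≤
          Metric.infDist (z k + (z k)⁻¹) (Complex.ofReal '' Icc (-2:ℝ) 2) := by
        by_contra hcon
        push_neg at hcon
        obtain ⟨p, hp, hdp⟩ := (Metric.infDist_lt_iff hne).mp hcon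
        have := lower_aux (z k) (hz1 k) (hz0 k) p hp
        linarith
      linarith
    have hD := hD0 k
    calc 1 - ‖z k‖
        = (1 - ‖z k‖) * ‖z k - (z k)⁻¹‖ / ‖z k - (z k)⁻¹‖ :=
          (mul_div_cancel_right₀ _ hD.ne').symm
    _ ≤ 2 * Metric.infDist (z k + (z k)⁻¹) (Complex.ofReal '' Icc (-2:ℝ) 2) /
          ‖z k - (z k)⁻¹‖ := by gcongr
    _ = 2 * (Metric.infDist (z k + (z k)⁻¹) (Complex.ofReal '' Icc (-2:ℝ) 2) /
          ‖z k - (z k)⁻¹‖) := mul_div_assoc _ _ _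
  have hf0 : ∀ k, 0 ≤ f k := fun k =>
    div_nonneg Metric.infDist_nonneg (Real.sqrt_nonneg _)
  have hg0 : ∀ k, 0 ≤ 1 - ‖z k‖ := fun k => by linarith [hz1 k]
  constructor
  · intro h
    exact Summable.of_nonneg_of_le hg0 hfge (h.mul_left 2)
  · intro h
    exact Summable.of_nonneg_of_le hf0 hfle (h.mul_left 2)
end
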